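/- The Fano polygons conv{(1,0),(0,1),(−1,−1),(0,−1)} (corresponding to the del Pezzo surface 𝔽₁) and conv{(1,0),(0,1),(−1,0),(0,−1)} (corresponding to ℙ¹ × ℙ¹) are not mutation-equivalent. -/

import Mathlib

open scoped Pointwise

namespace FanoPaper

abbrev NZ : Type := ℤ × ℤ
abbrev NQ : Type := ℚ × ℚ

/-- Embedding of the lattice `N = ℤ²` into `N ⊗ ℚ = ℚ²`. -/
def ι (v : NZ) : NQ := ((v.1 : ℚ), (v.2 : ℚ))

/-- Pairing between `M = Hom(N, ℤ)` (identified with `ℤ²`) and `N`. -/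
def dotZ (w v : NZ) : ℤ := w.1 * v.1 + w.2 * v.2

/-- Pairing between `M` and `N ⊗ ℚ`. -/
def dotQ (w : NZ) (x : NQ) : ℚ := (w.1 : ℚ) * x.1 + (w.2 : ℚ) * x.2

/-- The determinant `u ∧ u' = u₁u'₂ − u₂u'₁`. -/
def wedge (u v : NZ) : ℤ := u.1 * v.2 - u.2 * v.1

/-- A lattice vector is primitive if its coordinates are coprime. -/
def Primitive (v : NZ) : Prop := IsCoprime v.1 v.2

/-- A Fano polygon: the convex hull of a finite set of primitive lattice vertices,
containing the origin in its strict interior; `verts` is exactly the vertex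
(extreme point) set. -/
structure FanoPolygon where
  verts : Finset NZ
  verts_nonempty : verts.Nonempty
  verts_primitive : ∀ v ∈ verts, Primitive v
  zero_mem_interior : (0 : NQ) ∈ interior (convexHull ℚ (ι '' (verts : Set NZ)))
  verts_extreme : ∀ v ∈ verts, ι v ∉ convexHull ℚ (ι '' ((verts.erase v : Finset NZ) : Set NZ))

namespace FanoPolygon

/-- The polygon itself, as a subset of `ℚ²`. -/
def hull (P : FanoPolygon) : Set NQ := convexHull ℚ (ι '' (P.verts : Set NZ))

/-- `h_min := min w(P)`. -/
def hMin (P : FanoPolygon) (w : NZ) : ℤ := P.verts.inf' P.verts_nonempty (dotZ w)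

/-- `h_max := max w(P)`. -/
def hMax (P : FanoPolygon) (w : NZ) : ℤ := P.verts.sup' P.verts_nonempty (dotZ w)

/-- `w` is the primitive inner normal vector of an edge of `P`:
`w` is primitive and attains its minimum on `P` at (at least) two vertices. -/
def IsEdgeNormal (P : FanoPolygon) (w : NZ) : Prop :=
  Primitive w ∧ 2 ≤ (P.verts.filter (fun v => dotZ w v = P.hMin w)).card

/-- The edge of `P` with inner normal `w`, i.e. the face on which `w` is minimal. -/
def edge (P : FanoPolygon) (w : NZ) : Set NQ :=
  {x | x ∈ P.hull ∧ dotQ w x = (P.hMin w : ℚ)}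

/-- The height (local index) `r_E` of the edge with inner normal `w`. -/
def height (P : FanoPolygon) (w : NZ) : ℤ := -(P.hMin w)

/-- The width `k_E = |E ∩ N| − 1` of the edge with inner normal `w`. -/
noncomputable def width (P : FanoPolygon) (w : NZ) : ℕ :=
  {v : NZ | ι v ∈ P.edge w}.ncard - 1

/-- `w_h(P) := conv{x ∈ P ∩ N : w(x) = h}`. -/
def slice (P : FanoPolygon) (w : NZ) (h : ℤ) : Set NQ :=
  convexHull ℚ (ι '' {v : NZ | ι v ∈ P.hull ∧ dotZ w v = h})

end FanoPolygon

/-- The factor `F = conv{0, v}`. -/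
def factor (v : NZ) : Set NQ := convexHull ℚ {(0 : NQ), ι v}

/-- A (possibly empty) lattice polytope in `ℚ²`. -/
def IsLatticePolytope (S : Set NQ) : Prop :=
  ∃ T : Finset NZ, S = convexHull ℚ (ι '' (T : Set NZ))

/-- The data `{G_h}` required to mutate `P` with respect to `w` with factor `conv{0, v}`:
for each `h_min ≤ h ≤ −1`, `G_h` is a lattice polytope with
`{vertices of P at height h} ⊆ G_h + |h|·F ⊆ w_h(P)`. -/
def MutationData (P : FanoPolygon) (w v : NZ) (G : ℤ → Set NQ) : Prop :=
  ∀ h : ℤ, P.hMin w ≤ h → h ≤ -1 →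
    IsLatticePolytope (G h) ∧
    ι '' {x : NZ | x ∈ P.verts ∧ dotZ w x = h} ⊆ G h + ((|h| : ℚ) • factor v) ∧
    G h + ((|h| : ℚ) • factor v) ⊆ P.slice w h

/-- The mutated set `mut_w(P, F)`. -/
def mutSet (P : FanoPolygon) (w v : NZ) (G : ℤ → Set NQ) : Set NQ :=
  convexHull ℚ ((⋃ h ∈ Finset.Icc (P.hMin w) (-1 : ℤ), G h) ∪
    ⋃ h ∈ Finset.Icc (0 : ℤ) (P.hMax w), (P.slice w h + ((h : ℚ) • factor v)))

/-- `Q` is the mutation of `P` with respect to `w` with factor `conv{0, v}`. -/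
def IsMutationWith (P : FanoPolygon) (w v : NZ) (Q : FanoPolygon) : Prop :=
  ∃ G : ℤ → Set NQ, MutationData P w v G ∧ Q.hull = mutSet P w v G

/-- `Q` is a mutation of `P`. -/
def IsMutation (P Q : FanoPolygon) : Prop :=
  ∃ w v : NZ, P.IsEdgeNormal w ∧ Primitive v ∧ dotZ w v = 0 ∧ IsMutationWith P w v Q

/-- `GL₂(ℤ)`-equivalence of Fano polygons. -/
def GLEquiv (P Q : FanoPolygon) : Prop :=
  ∃ f : NZ ≃ₗ[ℤ] NZ, Q.verts = P.verts.image f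

/-- Mutation-equivalence: the equivalence relation generated by mutations and
`GL₂(ℤ)`-transformations. -/
def MutEquiv (P Q : FanoPolygon) : Prop :=
  Relation.EqvGen (fun A B => IsMutation A B ∨ GLEquiv A B) P Q

/-- There exists a mutation of `P` with respect to `w`: a factor and lattice polytopes
`{G_h}` satisfying the defining inclusions. -/
def AdmitsMutation (P : FanoPolygon) (w : NZ) : Prop :=
  ∃ v : NZ, Primitive v ∧ dotZ w v = 0 ∧ ∃ G : ℤ → Set NQ, MutationData P w v G

namespace FanoPolygon

/-- The number of lattice points on the boundary of `P`. -/
noncomputable def boundaryPts (P : FanoPolygon) : ℕ :=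
  {v : NZ | ι v ∈ frontier P.hull}.ncard

/-- The number of lattice points in the strict interior of `P`. -/
noncomputable def interiorPts (P : FanoPolygon) : ℕ :=
  {v : NZ | ι v ∈ interior P.hull}.ncard

/-- `P` is minimal if every mutation has at least as many boundary lattice points. -/
def Minimal (P : FanoPolygon) : Prop :=
  ∀ Q : FanoPolygon, IsMutation P Q → P.boundaryPts ≤ Q.boundaryPts

/-- Empty residual basket: `r_E ∣ k_E` for every edge `E` of `P`. -/
def EmptyBasket (P : FanoPolygon) : Prop :=
  ∀ w : NZ, P.IsEdgeNormal w → P.height w ∣ (P.width w : ℤ)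

/-- The number `n` of primitive T-cones of `P`: `n = Σ_E ⌊k_E / r_E⌋`. -/
noncomputable def tConeCount (P : FanoPolygon) : ℕ :=
  ∑ᶠ w ∈ {w : NZ | P.IsEdgeNormal w}, P.width w / (P.height w).toNat

/-- All residual singularities of `P` are of type `1/3(1,1)`: every edge `E`
satisfies `r_E ∣ k_E` or (`r_E = 3` and `k_E ≡ 1 mod 3`). -/
def ThirdBasket (P : FanoPolygon) : Prop :=
  ∀ w : NZ, P.IsEdgeNormal w →
    P.height w ∣ (P.width w : ℤ) ∨ (P.height w = 3 ∧ P.width w % 3 = 1)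

/-- The number `m` of residual singularities `1/3(1,1)`:
the number of edges `E` with `r_E = 3` and `3 ∤ k_E`. -/
noncomputable def thirdCount (P : FanoPolygon) : ℕ :=
  {w : NZ | P.IsEdgeNormal w ∧ P.height w = 3 ∧ ¬ (3 ∣ P.width w)}.ncard

/-- The number of residual lattice points of `P`:
`Σ_E ( q_E(r_E − 1)/2 + max(q_E − 1, 0) )` with `q_E = k_E mod r_E`. -/
noncomputable def residualCount (P : FanoPolygon) : ℚ :=
  ∑ᶠ w ∈ {w : NZ | P.IsEdgeNormal w},
    (((((P.width w : ℤ) % P.height w) : ℤ) : ℚ) * ((P.height w : ℚ) - 1) / 2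
      + max (((((P.width w : ℤ) % P.height w) : ℤ) : ℚ) - 1) 0)

end FanoPolygon

/-- Embedding of the lattice into `ℝ²`, used to measure volumes. -/
def ιR (v : NZ) : ℝ × ℝ := ((v.1 : ℝ), (v.2 : ℝ))

namespace FanoPolygon

/-- The polygon, realised in `ℝ²`. -/
def hullR (P : FanoPolygon) : Set (ℝ × ℝ) := convexHull ℝ (ιR '' (P.verts : Set NZ))

/-- Normalised volume (twice the Euclidean area) of `P`. -/
noncomputable def nvol (P : FanoPolygon) : ℝ := 2 * (MeasureTheory.volume P.hullR).toReal

/-- The dual polygon `P* = {u : u(x) ≥ −1 ∀ x ∈ P}`, realised in `ℝ²`. -/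
def dualR (P : FanoPolygon) : Set (ℝ × ℝ) :=
  {u : ℝ × ℝ | ∀ x ∈ P.hullR, -1 ≤ u.1 * x.1 + u.2 * x.2}

/-- Normalised volume of the dual polygon `P*`. -/
noncomputable def nvolDual (P : FanoPolygon) : ℝ := 2 * (MeasureTheory.volume P.dualR).toReal

/-- The sublattice `Λ_P ⊆ M` generated by the primitive inner normal vectors of the
edges of `P`. -/
def normalLattice (P : FanoPolygon) : Submodule ℤ NZ :=
  Submodule.span ℤ {w : NZ | P.IsEdgeNormal w}

/-- The index `[M : Λ_P]`. -/
noncomputable def latticeIndex (P : FanoPolygon) : ℕ :=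
  P.normalLattice.toAddSubgroup.index

/-- A T-edge normal: an edge normal whose edge satisfies `k_E ≥ r_E`. -/
def IsTEdgeNormal (P : FanoPolygon) (w : NZ) : Prop :=
  P.IsEdgeNormal w ∧ P.height w ≤ (P.width w : ℤ)

/-- `ws` enumerates the primitive T-cone normals of `P` with multiplicities:
each T-edge normal `w` occurs exactly `⌊k_E/r_E⌋` times, and nothing else occurs. -/
def IsTConeEnum (P : FanoPolygon) {n : ℕ} (ws : Fin n → NZ) : Prop :=
  ∀ w : NZ,
    (P.IsTEdgeNormal w →
      (Finset.univ.filter (fun i : Fin n => ws i = w)).card = P.width w / (P.height w).toNat) ∧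
    (¬ P.IsTEdgeNormal w → (Finset.univ.filter (fun i : Fin n => ws i = w)).card = 0)

end FanoPolygon

end FanoPaper


namespace FanoPaper

namespace Inv

abbrev R2 : Type := ℝ × ℝ

/-- cast `ℚ² → ℝ²`. -/
def c2 (p : NQ) : R2 := ((p.1 : ℝ), (p.2 : ℝ))

@[simp] lemma c2_ι (x : NZ) : c2 (ι x) = ιR x := by
  simp [c2, ι, ιR]

lemma c2_add (p q : NQ) : c2 (p + q) = c2 p + c2 q := by
  simp [c2, Prod.ext_iff]

lemma c2_smul (t : ℚ) (p : NQ) : c2 (t • p) = (t : ℝ) • c2 p := by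
  simp [c2, Prod.ext_iff, Prod.smul_def]

/-- linear functionals on `ℝ²`. -/
def lf (a b : ℝ) : R2 →ₗ[ℝ] ℝ where
  toFun p := a * p.1 + b * p.2
  map_add' p q := by simp; ring
  map_smul' t p := by simp [Prod.smul_def]; ring

@[simp] lemma lf_apply (a b : ℝ) (p : R2) : lf a b p = a * p.1 + b * p.2 := rfl

lemma convex_le (a b M : ℝ) : Convex ℝ {p : R2 | lf a b p ≤ M} := by
  intro x hx y hy s t hs ht hst
  simp only [Set.mem_setOf_eq] at *
  have : lf a b (s • x + t • y) = s * lf a b x + t * lf a b y := by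
    simp [map_add, map_smul, smul_eq_mul]
  rw [this]
  calc s * lf a b x + t * lf a b y ≤ s * M + t * M := by
        apply add_le_add <;> exact mul_le_mul_of_nonneg_left (by assumption) (by assumption)
    _ = M := by rw [← add_mul, hst, one_mul]

lemma hull_le {s : Set R2} {a b M : ℝ} (h : ∀ y ∈ s, lf a b y ≤ M) :
    ∀ x ∈ convexHull ℝ s, lf a b x ≤ M :=
  fun _ hx => convexHull_min h (convex_le a b M) hx

lemma c2_image_hull (s : Set NQ) :
    c2 '' (convexHull ℚ s) ⊆ convexHull ℝ (c2 '' s) := by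
  rw [Set.image_subset_iff]
  apply convexHull_min
  · intro x hx
    exact Set.mem_preimage.2 (subset_convexHull ℝ _ (Set.mem_image_of_mem _ hx))
  · intro x hx y hy s' t hs ht hst
    simp only [Set.mem_preimage] at *
    have : c2 (s' • x + t • y) = (s' : ℝ) • c2 x + (t : ℝ) • c2 y := by
      rw [c2_add, c2_smul, c2_smul]
    rw [this]
    exact (convex_convexHull ℝ _) hx hy (by positivity) (by positivity)
      (by exact_mod_cast hst)

lemma hulls_eq {A B : Set NQ} (h : convexHull ℚ A = convexHull ℚ B) :
    convexHull ℝ (c2 '' A) = convexHull ℝ (c2 '' B) := by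
  have key : ∀ {X Y : Set NQ}, convexHull ℚ X = convexHull ℚ Y →
      convexHull ℝ (c2 '' X) ⊆ convexHull ℝ (c2 '' Y) := by
    intro X Y hXY
    have h1 : c2 '' X ⊆ convexHull ℝ (c2 '' Y) := by
      intro y hy
      obtain ⟨x, hx, rfl⟩ := hy
      have : x ∈ convexHull ℚ Y := by
        rw [← hXY]; exact subset_convexHull ℚ _ hx
      exact c2_image_hull Y (Set.mem_image_of_mem _ this)
    exact convexHull_min h1 (convex_convexHull ℝ _)
  exact le_antisymm (key h) (key h.symm)

lemma exists_pos_combo {s : Set R2} {x : R2} (hx : x ∈ convexHull ℝ s) :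
    ∃ (ι' : Type) (t : Finset ι') (w : ι' → ℝ) (z : ι' → R2),
      (∀ i ∈ t, 0 < w i) ∧ (∑ i ∈ t, w i = 1) ∧ (∀ i ∈ t, z i ∈ s) ∧
      (∑ i ∈ t, w i • z i = x) := by
  rw [convexHull_eq] at hx
  obtain ⟨ι', t, w, z, hw0, hw1, hz, hcm⟩ := hx
  rw [Finset.centerMass, hw1, inv_one, one_smul] at hcm
  refine ⟨ι', t.filter (fun i => 0 < w i), w, z, ?_, ?_, ?_, ?_⟩
  · intro i hi; exact (Finset.mem_filter.1 hi).2
  · rw [Finset.sum_filter_of_ne]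
    · exact hw1
    · intro i hi hne
      exact lt_of_le_of_ne (hw0 i hi) (Ne.symm hne)
  · intro i hi; exact hz i (Finset.mem_filter.1 hi).1
  · rw [Finset.sum_filter_of_ne]
    · exact hcm
    · intro i hi hne
      refine lt_of_le_of_ne (hw0 i hi) ?_
      intro h0
      rw [← h0] at hne
      simp at hne

lemma combo_forces {ι' : Type} {t : Finset ι'} {w : ι' → ℝ} {g : ι' → ℝ} {M : ℝ}
    (hw : ∀ i ∈ t, 0 < w i) (h1 : ∑ i ∈ t, w i = 1) (hle : ∀ i ∈ t, g i ≤ M)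
    (hsum : ∑ i ∈ t, w i * g i = M) : ∀ i ∈ t, g i = M := by
  have h2 : ∑ i ∈ t, w i * (M - g i) = ∑ i ∈ t, (w i * M - w i * g i) :=
    Finset.sum_congr rfl (fun i _ => by ring)
  have hz : ∑ i ∈ t, w i * (M - g i) = 0 := by
    rw [h2, Finset.sum_sub_distrib, ← Finset.sum_mul, h1, one_mul, hsum, sub_self]
  have hterm : ∀ i ∈ t, w i * (M - g i) = 0 := by
    rw [Finset.sum_eq_zero_iff_of_nonneg] at hz
    · exact hz
    · intro i hi
      exact mul_nonneg (hw i hi).le (sub_nonneg.2 (hle i hi))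
  intro i hi
  rcases mul_eq_zero.1 (hterm i hi) with h | h
  · exact absurd h (hw i hi).ne'
  · linarith [sub_eq_zero.1 h]

/-- If a linear functional attains its sup over `S` at an interior point, it vanishes. -/
lemma ni {S : Set R2} {x : R2} {a b : ℝ} (hx : x ∈ interior S)
    (hmax : ∀ y ∈ S, lf a b y ≤ lf a b x) : a = 0 ∧ b = 0 := by
  rw [mem_interior_iff_mem_nhds, Metric.mem_nhds_iff] at hx
  obtain ⟨ε, hε, hball⟩ := hx
  have hden : (0:ℝ) < |a| + |b| + 1 := by positivity
  set δ : ℝ := ε / (2 * (|a| + |b| + 1)) with hδ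
  have hδpos : 0 < δ := by positivity
  have hy : (x.1 + δ * a, x.2 + δ * b) ∈ S := by
    apply hball
    rw [Metric.mem_ball]
    have h1 : dist ((x.1 + δ * a, x.2 + δ * b) : R2) x
        = max (dist (x.1 + δ * a) x.1) (dist (x.2 + δ * b) x.2) := Prod.dist_eq
    have da : dist (x.1 + δ * a) x.1 = δ * |a| := by
      rw [Real.dist_eq, show x.1 + δ * a - x.1 = δ * a by ring, abs_mul,
        abs_of_nonneg hδpos.le]
    have db : dist (x.2 + δ * b) x.2 = δ * |b| := by
      rw [Real.dist_eq, show x.2 + δ * b - x.2 = δ * b by ring, abs_mul,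
        abs_of_nonneg hδpos.le]
    rw [h1, da, db]
    have hlt : ∀ c : ℝ, |c| ≤ |a| + |b| → δ * |c| < ε := by
      intro c hc
      have h3 : δ * |c| ≤ δ * (|a| + |b|) := mul_le_mul_of_nonneg_left hc hδpos.le
      have h2 : δ * (|a| + |b|) < ε := by
        rw [hδ, div_mul_eq_mul_div, div_lt_iff₀ (by positivity)]
        nlinarith [abs_nonneg a, abs_nonneg b]
      linarith
    exact max_lt (hlt a (by linarith [abs_nonneg b])) (hlt b (by linarith [abs_nonneg a]))
  have hmx := hmax _ hy
  simp only [lf_apply] at hmx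
  have hq : δ * (a ^ 2 + b ^ 2) ≤ 0 := by nlinarith
  have hab : a ^ 2 + b ^ 2 ≤ 0 := by nlinarith
  constructor <;> nlinarith [sq_nonneg a, sq_nonneg b]

/-- Supporting functional at a non-interior point of a convex set with nonempty interior. -/
lemma exists_support {S : Set R2} (hconv : Convex ℝ S) {x0 : R2} (h0 : x0 ∈ interior S)
    {x : R2} (hx : x ∉ interior S) :
    ∃ a b : ℝ, ¬(a = 0 ∧ b = 0) ∧ ∀ y ∈ S, lf a b y ≤ lf a b x := by
  obtain ⟨f, hf⟩ := geometric_hahn_banach_open_point (hconv.interior) isOpen_interior hx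
  have hfl : ∀ y : R2, f y = lf (f (1, 0)) (f (0, 1)) y := by
    intro y
    have hy : y = y.1 • ((1 : ℝ), (0 : ℝ)) + y.2 • ((0 : ℝ), (1 : ℝ)) := by
      simp [Prod.ext_iff]
    rw [lf_apply]
    nth_rewrite 1 [hy]
    rw [map_add, map_smul, map_smul, smul_eq_mul, smul_eq_mul]
    ring
  refine ⟨f (1, 0), f (0, 1), ?_, ?_⟩
  · rintro ⟨h1, h2⟩
    have hlt := hf _ h0
    rw [hfl x0, hfl x, h1, h2] at hlt
    simp at hlt
  · intro y hy
    rw [← hfl, ← hfl]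
    by_contra hgt
    push_neg at hgt
    have hx0 : f x0 < f x := hf _ h0
    have hD : (0:ℝ) < f y - f x0 := by linarith
    set t : ℝ := (f y - f x) / (f y - f x0) with ht
    have htpos : 0 < t := by
      apply div_pos <;> linarith
    have htlt : t < 1 := by
      rw [ht, div_lt_one hD]; linarith
    have hmem : t • x0 + (1 - t) • y ∈ interior S :=
      hconv.combo_interior_self_mem_interior h0 hy htpos (by linarith) (by ring)
    have hlt := hf _ hmem
    rw [map_add, map_smul, map_smul, smul_eq_mul, smul_eq_mul] at hlt
    have htD : t * (f y - f x0) = f y - f x := by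
      rw [ht, div_mul_cancel₀ _ hD.ne']
    nlinarith

/-! ### Integer lattice arithmetic -/

lemma dotZ_smul_add (c : NZ) (m : ℤ) (u x : NZ) :
    dotZ c (m • u + x) = m * dotZ c u + dotZ c x := by
  simp [dotZ, Prod.smul_def, smul_eq_mul]; ring

lemma dotZ_sub (c x y : NZ) : dotZ c (x - y) = dotZ c x - dotZ c y := by
  simp [dotZ]; ring

lemma dotZ_add (c x y : NZ) : dotZ c (x + y) = dotZ c x + dotZ c y := by
  simp [dotZ]; ring

lemma prim_ne_zero {w : NZ} (hw : Primitive w) : ¬(w.1 = 0 ∧ w.2 = 0) := by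
  rintro ⟨h1, h2⟩
  rw [Primitive, h1, h2] at hw
  exact (by simpa using hw.isUnit_of_dvd' (dvd_refl 0) (dvd_refl 0) : False)

lemma prim_exists_dual {w : NZ} (hw : Primitive w) : ∃ u : NZ, dotZ w u = 1 := by
  obtain ⟨a, b, hab⟩ := hw
  exact ⟨(a, b), by simp [dotZ]; linarith [hab]⟩

/-- kernel of `w` is spanned by `v`. -/
lemma ker_eq {w v : NZ} (hw : Primitive w) (hv : Primitive v) (hwv : dotZ w v = 0)
    {x : NZ} (hx : dotZ w x = 0) : ∃ j : ℤ, x = j • v := by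
  obtain ⟨a, b, hab⟩ := hw
  obtain ⟨p, q, hpq⟩ := hv
  simp only [dotZ] at hwv hx
  have hv1 : v.1 = -((a * v.2 - b * v.1) * w.2) := by
    linear_combination (-v.1) * hab + a * hwv
  have hv2 : v.2 = (a * v.2 - b * v.1) * w.1 := by
    linear_combination (-v.2) * hab + b * hwv
  have hx1 : x.1 = -((a * x.2 - b * x.1) * w.2) := by
    linear_combination (-x.1) * hab + a * hx
  have hx2 : x.2 = (a * x.2 - b * x.1) * w.1 := by
    linear_combination (-x.2) * hab + b * hx
  have hsu : (a * v.2 - b * v.1) * (q * w.1 - p * w.2) = 1 := by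
    linear_combination hpq - p * hv1 - q * hv2
  have hs2 : (a * v.2 - b * v.1) = 1 ∨ (a * v.2 - b * v.1) = -1 :=
    Int.isUnit_iff.1 (IsUnit.of_mul_eq_one _ hsu)
  have hss : (a * v.2 - b * v.1) * (a * v.2 - b * v.1) = 1 := by
    rcases hs2 with h | h <;> rw [h] <;> ring
  refine ⟨(a * x.2 - b * x.1) * (a * v.2 - b * v.1), ?_⟩
  rw [Prod.ext_iff]
  constructor
  · show x.1 = _
    simp only [Prod.smul_def, smul_eq_mul]
    linear_combination hx1 - ((a * x.2 - b * x.1) * (a * v.2 - b * v.1)) * hv1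
      + ((a * x.2 - b * x.1) * w.2) * hss
  · show x.2 = _
    simp only [Prod.smul_def, smul_eq_mul]
    linear_combination hx2 - ((a * x.2 - b * x.1) * (a * v.2 - b * v.1)) * hv2
      + (-(a * x.2 - b * x.1) * w.1) * hss

lemma decomp {w v : NZ} (hw : Primitive w) (hv : Primitive v) (hwv : dotZ w v = 0)
    {u : NZ} (hu : dotZ w u = 1) (x : NZ) :
    ∃ j : ℤ, x = (dotZ w x) • u + j • v := by
  have hker : dotZ w (x - (dotZ w x) • u) = 0 := by
    simp only [dotZ, Prod.smul_def, smul_eq_mul, Prod.fst_sub, Prod.snd_sub] at *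
    linear_combination (-(w.1 * x.1 + w.2 * x.2)) * hu
  obtain ⟨j, hj⟩ := ker_eq hw hv hwv hker
  exact ⟨j, by rw [← hj]; abel⟩

lemma parity_iff {c w v : NZ} (hw : Primitive w) (hv : Primitive v) (hwv : dotZ w v = 0)
    {u : NZ} (hu : dotZ w u = 1) (hcv : Even (dotZ c v)) (hcu : Odd (dotZ c u)) :
    ∀ x : NZ, (Even (dotZ c x) ↔ Even (dotZ w x)) := by
  intro x
  obtain ⟨j, hj⟩ := decomp hw hv hwv hu x
  have hcx : dotZ c x = (dotZ w x) * dotZ c u + j * dotZ c v := by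
    conv_lhs => rw [hj]
    simp [dotZ, Prod.smul_def, smul_eq_mul]; ring
  have hjv : Even (j * dotZ c v) := hcv.mul_left j
  have h2 : ¬ Even (dotZ c u) := Int.not_even_iff_odd.2 hcu
  rw [hcx, Int.even_add]
  simp [hjv, Int.even_mul, h2]

/-! ### Polygon basics over ℝ -/

lemma lf_ιR (w x : NZ) : lf (w.1 : ℝ) (w.2 : ℝ) (ιR x) = (dotZ w x : ℝ) := by
  simp [ιR, dotZ]

lemma lf_c2 (w : NZ) (p : NQ) : lf (w.1 : ℝ) (w.2 : ℝ) (c2 p) = ((dotQ w p : ℚ) : ℝ) := by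
  simp [c2, dotQ]

lemma lf_neg (a b : ℝ) (x : R2) : lf (-a) (-b) x = -(lf a b x) := by
  simp; ring

lemma hullR_def (P : FanoPolygon) :
    P.hullR = convexHull ℝ (c2 '' (ι '' (P.verts : Set NZ))) := by
  unfold FanoPolygon.hullR
  rw [Set.image_image]
  have : (fun x => c2 (ι x)) = ιR := funext c2_ι
  rw [this]

lemma c2_hull_mem {P : FanoPolygon} {p : NQ} (hp : p ∈ P.hull) : c2 p ∈ P.hullR := by
  rw [hullR_def]
  exact c2_image_hull _ (Set.mem_image_of_mem _ hp)

lemma vert_mem_hullR {P : FanoPolygon} {V : NZ} (hV : V ∈ P.verts) : ιR V ∈ P.hullR :=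
  subset_convexHull ℝ _ (Set.mem_image_of_mem _ hV)

/-- max of a functional over the vertices. -/
noncomputable def vmax (P : FanoPolygon) (a b : ℝ) : ℝ :=
  P.verts.sup' P.verts_nonempty (fun V => lf a b (ιR V))

lemma le_vmax {P : FanoPolygon} {V : NZ} (hV : V ∈ P.verts) (a b : ℝ) :
    lf a b (ιR V) ≤ vmax P a b := Finset.le_sup' (fun V => lf a b (ιR V)) hV

lemma vmax_attained (P : FanoPolygon) (a b : ℝ) :
    ∃ V ∈ P.verts, lf a b (ιR V) = vmax P a b := by
  obtain ⟨V, hV, hV'⟩ := Finset.exists_mem_eq_sup' P.verts_nonempty (fun V => lf a b (ιR V))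
  exact ⟨V, hV, hV'.symm⟩

lemma hull_le_vmax {P : FanoPolygon} (a b : ℝ) :
    ∀ x ∈ P.hullR, lf a b x ≤ vmax P a b := by
  apply hull_le
  rintro y ⟨V, hV, rfl⟩
  exact le_vmax hV a b

lemma hull_ge_hMin {P : FanoPolygon} (w : NZ) :
    ∀ x ∈ P.hullR, (P.hMin w : ℝ) ≤ lf (w.1 : ℝ) (w.2 : ℝ) x := by
  intro x hx
  have key : ∀ y ∈ ιR '' (P.verts : Set NZ),
      lf (-(w.1 : ℝ)) (-(w.2 : ℝ)) y ≤ -(P.hMin w : ℝ) := by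
    rintro y ⟨V, hV, rfl⟩
    rw [lf_neg, lf_ιR, neg_le_neg_iff]
    exact_mod_cast Finset.inf'_le (dotZ w) hV
  have := hull_le key x hx
  rw [lf_neg] at this
  linarith

lemma hull_le_hMax {P : FanoPolygon} (w : NZ) :
    ∀ x ∈ P.hullR, lf (w.1 : ℝ) (w.2 : ℝ) x ≤ (P.hMax w : ℝ) := by
  apply hull_le
  rintro y ⟨V, hV, rfl⟩
  rw [lf_ιR]
  exact_mod_cast Finset.le_sup' (dotZ w) hV

lemma box_subset {S : Set R2} (hconv : Convex ℝ S) {r : ℝ} (hr : 0 < r)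
    (hA : ((r, r) : R2) ∈ S) (hB : ((r, -r) : R2) ∈ S)
    (hC : ((-r, r) : R2) ∈ S) (hD : ((-r, -r) : R2) ∈ S) :
    ∀ p : R2, |p.1| < r → |p.2| < r → p ∈ S := by
  intro p h1 h2
  rw [abs_lt] at h1 h2
  have h2r : (0:ℝ) < 2 * r := by linarith
  have combo2 : ∀ x y : R2, x ∈ S → y ∈ S → x.2 = y.2 → x.1 = r → y.1 = -r →
      ∀ z : ℝ, -r < z → z < r → ((z, x.2) : R2) ∈ S := by
    intro x y hx hy hxy hx1 hy1 z hz1 hz2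
    have ha : (0:ℝ) ≤ (r + z) / (2 * r) := by
      apply div_nonneg <;> linarith
    have hb : (0:ℝ) ≤ (r - z) / (2 * r) := by
      apply div_nonneg <;> linarith
    have hab : (r + z) / (2 * r) + (r - z) / (2 * r) = 1 := by field_simp; ring
    have hmem := hconv hx hy ha hb hab
    have heq : ((r + z) / (2 * r)) • x + ((r - z) / (2 * r)) • y = ((z, x.2) : R2) := by
      rw [Prod.ext_iff]
      constructor
      · simp only [Prod.fst_add, Prod.smul_def, smul_eq_mul, hx1, hy1]
        field_simp; ring
      · simp only [Prod.snd_add, Prod.smul_def, smul_eq_mul, ← hxy]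
        field_simp; ring
    rwa [heq] at hmem
  have hE : ((p.1, r) : R2) ∈ S := combo2 (r, r) (-r, r) hA hC rfl rfl rfl p.1 h1.1 h1.2
  have hF : ((p.1, -r) : R2) ∈ S := combo2 (r, -r) (-r, -r) hB hD rfl rfl rfl p.1 h1.1 h1.2
  have ha : (0:ℝ) ≤ (r + p.2) / (2 * r) := by apply div_nonneg <;> linarith
  have hb : (0:ℝ) ≤ (r - p.2) / (2 * r) := by apply div_nonneg <;> linarith
  have hab : (r + p.2) / (2 * r) + (r - p.2) / (2 * r) = 1 := by field_simp; ring
  have hmem := hconv hE hF ha hb hab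
  have heq : ((r + p.2) / (2 * r)) • ((p.1, r) : R2)
      + ((r - p.2) / (2 * r)) • ((p.1, -r) : R2) = p := by
    rw [Prod.ext_iff]
    constructor
    · simp only [Prod.fst_add, Prod.smul_def, smul_eq_mul]
      field_simp; ring
    · simp only [Prod.snd_add, Prod.smul_def, smul_eq_mul]
      field_simp; ring
  rwa [heq] at hmem

lemma zero_mem_interior_hullR (P : FanoPolygon) : (0 : R2) ∈ interior P.hullR := by
  have h0 := P.zero_mem_interior
  rw [mem_interior_iff_mem_nhds, Metric.mem_nhds_iff] at h0
  obtain ⟨ε, hε, hball⟩ := h0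
  obtain ⟨q, hq0, hqε⟩ := exists_rat_btwn hε
  have hqpos : 0 < q := by exact_mod_cast hq0
  have hcorner : ∀ s1 s2 : ℚ, |s1| = q → |s2| = q → ((s1, s2) : NQ) ∈ P.hull := by
    intro s1 s2 hs1 hs2
    apply hball
    rw [Metric.mem_ball]
    have h1 : dist ((s1, s2) : NQ) 0 = max (dist s1 (0:ℚ)) (dist s2 (0:ℚ)) := Prod.dist_eq
    have d1 : dist s1 (0:ℚ) = (q : ℝ) := by
      rw [Rat.dist_eq]; push_cast; rw [sub_zero]; exact_mod_cast hs1
    have d2 : dist s2 (0:ℚ) = (q : ℝ) := by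
      rw [Rat.dist_eq]; push_cast; rw [sub_zero]; exact_mod_cast hs2
    rw [h1, d1, d2, max_self]
    exact hqε
  have hr : (0:ℝ) < (q : ℝ) := hq0
  have hmem : ∀ s1 s2 : ℚ, |s1| = q → |s2| = q →
      (((s1 : ℝ), (s2 : ℝ)) : R2) ∈ P.hullR := by
    intro s1 s2 hs1 hs2
    have := c2_hull_mem (hcorner s1 s2 hs1 hs2)
    simpa [c2] using this
  have habs : |q| = q := abs_of_pos hqpos
  have habs' : |(-q : ℚ)| = q := by rw [abs_neg]; exact habs
  have hA := hmem q q habs habs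
  have hB := hmem q (-q) habs habs'
  have hC := hmem (-q) q habs' habs
  have hD := hmem (-q) (-q) habs' habs'
  push_cast at hA hB hC hD
  rw [mem_interior]
  refine ⟨Set.Ioo (-(q:ℝ)) q ×ˢ Set.Ioo (-(q:ℝ)) q, ?_, (isOpen_Ioo.prod isOpen_Ioo), ?_⟩
  · intro p hp
    obtain ⟨hp1, hp2⟩ := hp
    exact box_subset (convex_convexHull ℝ _) hr hA hB hC hD p
      (abs_lt.2 ⟨hp1.1, hp1.2⟩) (abs_lt.2 ⟨hp2.1, hp2.2⟩)
  · refine ⟨⟨?_, ?_⟩, ?_, ?_⟩ <;> simp <;> linarith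

/-! ### The parity invariant -/

/-- `c` is odd on every non-interior lattice point of `P`. -/
def HinvWith (P : FanoPolygon) (c : NZ) : Prop :=
  ∀ x : NZ, ιR x ∈ P.hullR → Even (dotZ c x) → ιR x ∈ interior P.hullR

def Hinv (P : FanoPolygon) : Prop := ∃ c : NZ, HinvWith P c

lemma odd_of_support {P : FanoPolygon} {c : NZ} (h : HinvWith P c) {x : NZ}
    (hx : ιR x ∈ P.hullR) {a b : ℝ} (hab : ¬(a = 0 ∧ b = 0))
    (hmax : ∀ y ∈ P.hullR, lf a b y ≤ lf a b (ιR x)) : Odd (dotZ c x) := by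
  rw [← Int.not_even_iff_odd]
  intro hev
  exact hab (ni (h x hx hev) hmax)

lemma cast_pair_ne {w : NZ} (hw : Primitive w) : ¬((w.1 : ℝ) = 0 ∧ (w.2 : ℝ) = 0) := by
  rintro ⟨h1, h2⟩
  exact prim_ne_zero hw ⟨by exact_mod_cast h1, by exact_mod_cast h2⟩

lemma hMax_pos {P : FanoPolygon} {w : NZ} (hw : Primitive w) : 0 < P.hMax w := by
  by_contra h
  push_neg at h
  have hmax : ∀ y ∈ P.hullR, lf (w.1 : ℝ) (w.2 : ℝ) y ≤ lf (w.1 : ℝ) (w.2 : ℝ) (0 : R2) := by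
    intro y hy
    have h1 := hull_le_hMax w y hy
    have h2 : ((P.hMax w : ℤ) : ℝ) ≤ 0 := by exact_mod_cast h
    simp only [lf_apply]
    simp only [lf_apply] at h1
    have : (0:R2).1 = 0 := rfl
    simp [this]
    linarith
  exact cast_pair_ne hw (ni (zero_mem_interior_hullR P) hmax)

lemma hMin_neg {P : FanoPolygon} {w : NZ} (hw : Primitive w) : P.hMin w < 0 := by
  by_contra h
  push_neg at h
  have hmax : ∀ y ∈ P.hullR, lf (-(w.1 : ℝ)) (-(w.2 : ℝ)) y
      ≤ lf (-(w.1 : ℝ)) (-(w.2 : ℝ)) (0 : R2) := by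
    intro y hy
    have h1 := hull_ge_hMin w y hy
    have h2 : (0:ℝ) ≤ ((P.hMin w : ℤ) : ℝ) := by exact_mod_cast h
    rw [lf_neg, lf_neg]
    have h3 : lf (w.1:ℝ) (w.2:ℝ) (0 : R2) = 0 := by simp [lf_apply, Prod.fst_zero]
    rw [h3, neg_zero]
    linarith
  have := ni (zero_mem_interior_hullR P) hmax
  exact cast_pair_ne hw ⟨by linarith [this.1], by linarith [this.2]⟩

/-! ### Mutation analysis -/

lemma ι_add (x y : NZ) : ι (x + y) = ι x + ι y := by
  simp [ι, Prod.ext_iff]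

lemma dotQ_ι (w x : NZ) : dotQ w (ι x) = (dotZ w x : ℚ) := by
  simp [dotQ, ι, dotZ]

lemma convex_dotQ_eq (w : NZ) (h : ℚ) : Convex ℚ {p : NQ | dotQ w p = h} := by
  intro x hx y hy s t hs ht hst
  simp only [Set.mem_setOf_eq] at *
  have : dotQ w (s • x + t • y) = s * dotQ w x + t * dotQ w y := by
    simp [dotQ, Prod.smul_def, smul_eq_mul]; ring
  rw [this, hx, hy, ← add_mul, hst, one_mul]

lemma slice_subset_hull {P : FanoPolygon} {w : NZ} {h : ℤ} :
    P.slice w h ⊆ P.hull := by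
  apply convexHull_min
  · rintro y ⟨x, ⟨hx, _⟩, rfl⟩
    exact hx
  · exact convex_convexHull ℚ _

lemma slice_level {P : FanoPolygon} {w : NZ} {h : ℤ} {p : NQ} (hp : p ∈ P.slice w h) :
    dotQ w p = (h : ℚ) := by
  have : P.slice w h ⊆ {p : NQ | dotQ w p = (h : ℚ)} := by
    apply convexHull_min
    · rintro y ⟨x, ⟨_, hx⟩, rfl⟩
      rw [Set.mem_setOf_eq, dotQ_ι, hx]
    · exact convex_dotQ_eq w h
  exact this hp

lemma factor_zero_mem (v : NZ) : (0 : NQ) ∈ factor v :=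
  subset_convexHull ℚ _ (by simp)

lemma factor_iv_mem (v : NZ) : ι v ∈ factor v :=
  subset_convexHull ℚ _ (by simp)

lemma factor_smul_mem (v : NZ) {t : ℚ} (h0 : 0 ≤ t) (h1 : t ≤ 1) : t • ι v ∈ factor v := by
  rw [factor, convexHull_pair]
  exact ⟨1 - t, t, by linarith, h0, by ring, by simp⟩

lemma zero_mem_smul_factor (v : NZ) (t : ℚ) : (0 : NQ) ∈ t • factor v :=
  Set.mem_smul_set.2 ⟨0, factor_zero_mem v, smul_zero t⟩

lemma smul_iv_mem_smul_factor (v : NZ) {s t : ℚ} (hs0 : 0 ≤ s) (hst : s ≤ t) :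
    s • ι v ∈ t • factor v := by
  rcases eq_or_lt_of_le (le_trans hs0 hst) with h | h
  · have hs : s = 0 := le_antisymm (h ▸ hst) hs0
    rw [hs, zero_smul]
    exact zero_mem_smul_factor v t
  · refine Set.mem_smul_set.2 ⟨(s / t) • ι v, factor_smul_mem v (by positivity)
      (by rw [div_le_one h]; exact hst), ?_⟩
    rw [smul_smul, mul_div_cancel₀ _ h.ne']

lemma factor_mem_decomp {v : NZ} {f : NQ} {t : ℚ} (ht : 0 ≤ t) (hf : f ∈ t • factor v) :
    ∃ s : ℚ, 0 ≤ s ∧ s ≤ t ∧ f = s • ι v := by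
  obtain ⟨f₀, hf₀, rfl⟩ := Set.mem_smul_set.1 hf
  rw [factor, convexHull_pair] at hf₀
  obtain ⟨a', b', _, hb, hab, hcomb⟩ := hf₀
  refine ⟨t * b', by positivity, ?_, ?_⟩
  · nlinarith
  · rw [← hcomb, smul_add]
    simp [smul_smul]

/-- generator set of the mutation. -/
def Xset (P : FanoPolygon) (w v : NZ) (G : ℤ → Set NQ) : Set NQ :=
  (⋃ h ∈ Finset.Icc (P.hMin w) (-1 : ℤ), G h) ∪
    ⋃ h ∈ Finset.Icc (0 : ℤ) (P.hMax w), (P.slice w h + ((h : ℚ) • factor v))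

lemma mutSet_eq (P : FanoPolygon) (w v : NZ) (G : ℤ → Set NQ) :
    mutSet P w v G = convexHull ℚ (Xset P w v G) := rfl

lemma Xset_cases {P : FanoPolygon} {w v : NZ} {G : ℤ → Set NQ} {y : NQ}
    (hy : y ∈ Xset P w v G) :
    (∃ h : ℤ, P.hMin w ≤ h ∧ h ≤ -1 ∧ y ∈ G h) ∨
    (∃ h : ℤ, 0 ≤ h ∧ h ≤ P.hMax w ∧ y ∈ P.slice w h + ((h : ℚ) • factor v)) := by
  rcases hy with hy | hy
  · left
    rw [Set.mem_iUnion₂] at hy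
    obtain ⟨h, hh, hyh⟩ := hy
    rw [Finset.mem_Icc] at hh
    exact ⟨h, hh.1, hh.2, hyh⟩
  · right
    rw [Set.mem_iUnion₂] at hy
    obtain ⟨h, hh, hyh⟩ := hy
    rw [Finset.mem_Icc] at hh
    exact ⟨h, hh.1, hh.2, hyh⟩

lemma G_mem_Xset {P : FanoPolygon} {w v : NZ} {G : ℤ → Set NQ} {h : ℤ}
    (hm : P.hMin w ≤ h) (h1 : h ≤ -1) {y : NQ} (hy : y ∈ G h) : y ∈ Xset P w v G := by
  left
  rw [Set.mem_iUnion₂]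
  exact ⟨h, Finset.mem_Icc.2 ⟨hm, h1⟩, hy⟩

lemma upper_mem_Xset {P : FanoPolygon} {w v : NZ} {G : ℤ → Set NQ} {h : ℤ}
    (h0 : 0 ≤ h) (hM : h ≤ P.hMax w) {y : NQ}
    (hy : y ∈ P.slice w h + ((h : ℚ) • factor v)) : y ∈ Xset P w v G := by
  right
  rw [Set.mem_iUnion₂]
  exact ⟨h, Finset.mem_Icc.2 ⟨h0, hM⟩, hy⟩

/-- the scenario of a mutation. -/
structure MutScen (P Q : FanoPolygon) (w v : NZ) (G : ℤ → Set NQ) : Prop where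
  hEN : P.IsEdgeNormal w
  hvp : Primitive v
  hwv : dotZ w v = 0
  hMD : MutationData P w v G
  hQ : Q.hull = mutSet P w v G

variable {P Q : FanoPolygon} {w v : NZ} {G : ℤ → Set NQ}

lemma MutScen.hullR_Q (S : MutScen P Q w v G) :
    Q.hullR = convexHull ℝ (c2 '' Xset P w v G) := by
  rw [hullR_def]
  exact hulls_eq S.hQ

lemma MutScen.G_subset_slice (S : MutScen P Q w v G) {h : ℤ}
    (hm : P.hMin w ≤ h) (h1 : h ≤ -1) : G h ⊆ P.slice w h := by
  intro y hy
  apply (S.hMD h hm h1).2.2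
  rw [show y = y + 0 by rw [add_zero]]
  exact Set.add_mem_add hy (zero_mem_smul_factor v _)

lemma MutScen.G_shift_slice (S : MutScen P Q w v G) {h : ℤ}
    (hm : P.hMin w ≤ h) (h1 : h ≤ -1) {y : NQ} (hy : y ∈ G h) :
    y + ((-h : ℤ) : ℚ) • ι v ∈ P.slice w h := by
  apply (S.hMD h hm h1).2.2
  refine Set.add_mem_add hy ?_
  rw [abs_of_nonpos (show (h:ℚ) ≤ 0 by exact_mod_cast (show h ≤ 0 by linarith))]
  rw [show ((-h : ℤ) : ℚ) = -(h:ℚ) by push_cast; ring]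
  exact Set.smul_mem_smul_set (factor_iv_mem v)

lemma MutScen.lf_vR (S : MutScen P Q w v G) :
    lf (w.1 : ℝ) (w.2 : ℝ) (ιR v) = 0 := by
  rw [lf_ιR, S.hwv, Int.cast_zero]

noncomputable def ra (w v : NZ) (a b : ℝ) : ℝ := a + (w.1 : ℝ) * lf a b (ιR v)
noncomputable def rb (w v : NZ) (a b : ℝ) : ℝ := b + (w.2 : ℝ) * lf a b (ιR v)
noncomputable def ja (w v : NZ) (a b : ℝ) : ℝ := a - (w.1 : ℝ) * lf a b (ιR v)
noncomputable def jb (w v : NZ) (a b : ℝ) : ℝ := b - (w.2 : ℝ) * lf a b (ιR v)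

lemma lf_r (w v : NZ) (a b : ℝ) (x : R2) :
    lf (ra w v a b) (rb w v a b) x
      = lf a b x + lf (w.1 : ℝ) (w.2 : ℝ) x * lf a b (ιR v) := by
  simp [ra, rb]; ring

lemma lf_j (w v : NZ) (a b : ℝ) (x : R2) :
    lf (ja w v a b) (jb w v a b) x
      = lf a b x - lf (w.1 : ℝ) (w.2 : ℝ) x * lf a b (ιR v) := by
  simp [ja, jb]; ring

lemma MutScen.lf_j_vR (S : MutScen P Q w v G) (a b : ℝ) :
    lf (ja w v a b) (jb w v a b) (ιR v) = lf a b (ιR v) := by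
  rw [lf_j, S.lf_vR, zero_mul, sub_zero]

lemma MutScen.r_of_j_a (S : MutScen P Q w v G) (a b : ℝ) :
    ra w v (ja w v a b) (jb w v a b) = a := by
  rw [ra, S.lf_j_vR, ja]; ring

lemma MutScen.r_of_j_b (S : MutScen P Q w v G) (a b : ℝ) :
    rb w v (ja w v a b) (jb w v a b) = b := by
  rw [rb, S.lf_j_vR, jb]; ring

lemma MutScen.piece_left (S : MutScen P Q w v G) {a b : ℝ}
    (hA : lf a b (ιR v) ≤ 0) :
    ∀ y ∈ c2 '' Xset P w v G, lf a b y ≤ vmax P a b ∧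
      (lf a b (ιR v) < 0 → lf a b y = vmax P a b → y ∈ P.hullR) := by
  rintro y' ⟨y, hy, rfl⟩
  rcases Xset_cases hy with ⟨h, hm, h1, hyG⟩ | ⟨h, h0, hM, hyU⟩
  · have hsl : y ∈ P.slice w h := S.G_subset_slice hm h1 hyG
    have hmem : c2 y ∈ P.hullR := c2_hull_mem (slice_subset_hull hsl)
    exact ⟨hull_le_vmax a b _ hmem, fun _ _ => hmem⟩
  · obtain ⟨p, hp, f, hf, rfl⟩ := Set.mem_add.1 hyU
    have h0Q : (0:ℚ) ≤ (h:ℚ) := by exact_mod_cast h0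
    obtain ⟨s, hs0, hsh, rfl⟩ := factor_mem_decomp h0Q hf
    have hc2 : c2 (p + s • ι v) = c2 p + (s : ℝ) • ιR v := by
      rw [c2_add, c2_smul, c2_ι]
    have hmem : c2 p ∈ P.hullR := c2_hull_mem (slice_subset_hull hp)
    have hval : lf a b (c2 (p + s • ι v)) = lf a b (c2 p) + (s:ℝ) * lf a b (ιR v) := by
      rw [hc2, map_add, map_smul, smul_eq_mul]
    have hs0R : (0:ℝ) ≤ (s:ℝ) := by exact_mod_cast hs0
    have hb := hull_le_vmax a b _ hmem
    have hsA : (s:ℝ) * lf a b (ιR v) ≤ 0 := by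
      have := mul_le_mul_of_nonneg_left hA hs0R
      rwa [mul_zero] at this
    constructor
    · rw [hval]; linarith
    · intro hAlt heq
      rw [hval] at heq
      have hs' : (s:ℝ) * lf a b (ιR v) = 0 := by linarith
      have hz : (s:ℝ) = 0 := by
        rcases mul_eq_zero.1 hs' with h' | h'
        · exact h'
        · exact absurd h' hAlt.ne
      rw [hc2, hz, zero_smul, add_zero]
      exact hmem

lemma MutScen.piece_right (S : MutScen P Q w v G) {a b : ℝ}
    (hA : 0 ≤ lf a b (ιR v)) :
    ∀ y ∈ c2 '' Xset P w v G,
      lf a b y ≤ vmax P (ra w v a b) (rb w v a b) ∧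
      (0 < lf a b (ιR v) → lf a b y = vmax P (ra w v a b) (rb w v a b) →
        y - lf (w.1:ℝ) (w.2:ℝ) y • ιR v ∈ P.hullR) := by
  rintro y' ⟨y, hy, rfl⟩
  rcases Xset_cases hy with ⟨h, hm, h1, hyG⟩ | ⟨h, h0, hM, hyU⟩
  · -- G piece
    have hsl2 : y + ((-h : ℤ) : ℚ) • ι v ∈ P.slice w h := S.G_shift_slice hm h1 hyG
    have hsl : y ∈ P.slice w h := S.G_subset_slice hm h1 hyG
    have hlev : dotQ w y = (h:ℚ) := slice_level hsl
    have hlev2 : dotQ w (y + ((-h : ℤ) : ℚ) • ι v) = (h:ℚ) := slice_level hsl2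
    have hmem2 : c2 (y + ((-h : ℤ) : ℚ) • ι v) ∈ P.hullR :=
      c2_hull_mem (slice_subset_hull hsl2)
    have hcast : (((-h : ℤ) : ℚ) : ℝ) = -(h:ℝ) := by push_cast; ring
    have hc2 : c2 (y + ((-h : ℤ) : ℚ) • ι v) = c2 y + (-(h:ℝ)) • ιR v := by
      rw [c2_add, c2_smul, c2_ι, hcast]
    have hw_y : lf (w.1:ℝ) (w.2:ℝ) (c2 y) = (h:ℝ) := by
      rw [lf_c2, hlev]; push_cast; ring
    have hw_y2 : lf (w.1:ℝ) (w.2:ℝ) (c2 (y + ((-h : ℤ) : ℚ) • ι v)) = (h:ℝ) := by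
      rw [lf_c2, hlev2]; push_cast; ring
    have hval : lf (ra w v a b) (rb w v a b) (c2 (y + ((-h : ℤ) : ℚ) • ι v))
        = lf a b (c2 y) := by
      rw [lf_r, hw_y2, hc2, map_add, map_smul, smul_eq_mul]
      ring
    constructor
    · rw [← hval]
      exact hull_le_vmax _ _ _ hmem2
    · intro _ _
      have hrw : c2 y - lf (w.1:ℝ) (w.2:ℝ) (c2 y) • ιR v
          = c2 (y + ((-h : ℤ) : ℚ) • ι v) := by
        rw [hw_y, hc2, neg_smul, ← sub_eq_add_neg]
      rw [hrw]
      exact hmem2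
  · -- upper piece
    obtain ⟨p, hp, f, hf, rfl⟩ := Set.mem_add.1 hyU
    have h0Q : (0:ℚ) ≤ (h:ℚ) := by exact_mod_cast h0
    obtain ⟨s, hs0, hsh, rfl⟩ := factor_mem_decomp h0Q hf
    have hc2 : c2 (p + s • ι v) = c2 p + (s : ℝ) • ιR v := by
      rw [c2_add, c2_smul, c2_ι]
    have hmem : c2 p ∈ P.hullR := c2_hull_mem (slice_subset_hull hp)
    have hlev : dotQ w p = (h:ℚ) := slice_level hp
    have hw_p : lf (w.1:ℝ) (w.2:ℝ) (c2 p) = (h:ℝ) := by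
      rw [lf_c2, hlev]; push_cast; ring
    have hval : lf a b (c2 (p + s • ι v)) = lf a b (c2 p) + (s:ℝ) * lf a b (ιR v) := by
      rw [hc2, map_add, map_smul, smul_eq_mul]
    have hshR : (s:ℝ) ≤ (h:ℝ) := by exact_mod_cast hsh
    have hsA : (s:ℝ) * lf a b (ιR v) ≤ (h:ℝ) * lf a b (ιR v) :=
      mul_le_mul_of_nonneg_right hshR hA
    have hrp : lf (ra w v a b) (rb w v a b) (c2 p)
        = lf a b (c2 p) + (h:ℝ) * lf a b (ιR v) := by
      rw [lf_r, hw_p]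
    have hbound := hull_le_vmax (ra w v a b) (rb w v a b) _ hmem
    constructor
    · rw [hval]
      rw [hrp] at hbound
      linarith
    · intro hAlt heq
      rw [hval] at heq
      rw [hrp] at hbound
      have hse : (s:ℝ) = (h:ℝ) := by
        have h1 : ((h:ℝ) - (s:ℝ)) * lf a b (ιR v) = 0 := by nlinarith
        rcases mul_eq_zero.1 h1 with h' | h'
        · linarith [sub_eq_zero.1 h']
        · exact absurd h' hAlt.ne'
      have hw_y : lf (w.1:ℝ) (w.2:ℝ) (c2 (p + s • ι v)) = (h:ℝ) := by
        rw [hc2, map_add, map_smul, smul_eq_mul, hw_p, S.lf_vR, mul_zero, add_zero]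
      rw [hw_y, hc2, hse]
      have : c2 p + (h:ℝ) • ιR v - (h:ℝ) • ιR v = c2 p := by abel
      rw [this]
      exact hmem

/-- inverse shear as a linear map. -/
noncomputable def rinv (w v : NZ) : R2 →ₗ[ℝ] R2 :=
  LinearMap.id - (lf (w.1:ℝ) (w.2:ℝ)).smulRight (ιR v)

lemma rinv_apply (w v : NZ) (x : R2) :
    rinv w v x = x - lf (w.1:ℝ) (w.2:ℝ) x • ιR v := rfl

lemma MutScen.Q_le_left (S : MutScen P Q w v G) {a b : ℝ}
    (hA : lf a b (ιR v) ≤ 0) : ∀ y ∈ Q.hullR, lf a b y ≤ vmax P a b := by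
  rw [S.hullR_Q]
  exact hull_le (fun y hy => (S.piece_left hA y hy).1)

lemma MutScen.Q_le_right (S : MutScen P Q w v G) {a b : ℝ}
    (hA : 0 ≤ lf a b (ιR v)) :
    ∀ y ∈ Q.hullR, lf a b y ≤ vmax P (ra w v a b) (rb w v a b) := by
  rw [S.hullR_Q]
  exact hull_le (fun y hy => (S.piece_right hA y hy).1)

lemma MutScen.Q_max_left (S : MutScen P Q w v G) {a b : ℝ}
    (hA : lf a b (ιR v) < 0) {x : R2} (hx : x ∈ Q.hullR)
    (hmax : lf a b x = vmax P a b) : x ∈ P.hullR := by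
  rw [S.hullR_Q] at hx
  obtain ⟨ι', t, wt, z, hw, h1, hz, hsum⟩ := exists_pos_combo hx
  have hle : ∀ i ∈ t, lf a b (z i) ≤ vmax P a b :=
    fun i hi => (S.piece_left hA.le _ (hz i hi)).1
  have hfx : ∑ i ∈ t, wt i * lf a b (z i) = vmax P a b := by
    rw [← hmax, ← hsum, map_sum]
    exact Finset.sum_congr rfl (fun i _ => by rw [map_smul, smul_eq_mul])
  have heach := combo_forces hw h1 hle hfx
  have hmem : ∀ i ∈ t, z i ∈ P.hullR :=
    fun i hi => (S.piece_left hA.le _ (hz i hi)).2 hA (heach i hi)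
  rw [← hsum]
  exact Convex.sum_mem (convex_convexHull ℝ _) (fun i hi => (hw i hi).le) h1 hmem

lemma MutScen.Q_max_right (S : MutScen P Q w v G) {a b : ℝ}
    (hA : 0 < lf a b (ιR v)) {x : R2} (hx : x ∈ Q.hullR)
    (hmax : lf a b x = vmax P (ra w v a b) (rb w v a b)) :
    x - lf (w.1:ℝ) (w.2:ℝ) x • ιR v ∈ P.hullR := by
  rw [S.hullR_Q] at hx
  obtain ⟨ι', t, wt, z, hw, h1, hz, hsum⟩ := exists_pos_combo hx
  have hle : ∀ i ∈ t, lf a b (z i) ≤ vmax P (ra w v a b) (rb w v a b) :=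
    fun i hi => (S.piece_right hA.le _ (hz i hi)).1
  have hfx : ∑ i ∈ t, wt i * lf a b (z i) = vmax P (ra w v a b) (rb w v a b) := by
    rw [← hmax, ← hsum, map_sum]
    exact Finset.sum_congr rfl (fun i _ => by rw [map_smul, smul_eq_mul])
  have heach := combo_forces hw h1 hle hfx
  have hmem : ∀ i ∈ t, rinv w v (z i) ∈ P.hullR := by
    intro i hi
    have := (S.piece_right hA.le _ (hz i hi)).2 hA (heach i hi)
    rwa [rinv_apply]
  have hxr : rinv w v x = ∑ i ∈ t, wt i • rinv w v (z i) := by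
    rw [← hsum, map_sum]
    exact Finset.sum_congr rfl (fun i _ => by rw [map_smul])
  rw [← rinv_apply, hxr]
  exact Convex.sum_mem (convex_convexHull ℝ _) (fun i hi => (hw i hi).le) h1 hmem

lemma MutScen.vert_push_upper (S : MutScen P Q w v G) {V : NZ} (hV : V ∈ P.verts)
    (h0 : 0 ≤ dotZ w V) : ιR V + (dotZ w V : ℝ) • ιR v ∈ Q.hullR := by
  have hslice : ι V ∈ P.slice w (dotZ w V) :=
    subset_convexHull ℚ _ ⟨V, ⟨subset_convexHull ℚ _ (Set.mem_image_of_mem _ hV), rfl⟩, rfl⟩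
  have hf : ((dotZ w V : ℤ) : ℚ) • ι v ∈ ((dotZ w V : ℤ) : ℚ) • factor v :=
    Set.smul_mem_smul_set (factor_iv_mem v)
  have hmem : ι V + ((dotZ w V : ℤ) : ℚ) • ι v
      ∈ P.slice w (dotZ w V) + ((dotZ w V : ℤ) : ℚ) • factor v :=
    Set.add_mem_add hslice hf
  have hX : ι V + ((dotZ w V : ℤ) : ℚ) • ι v ∈ Xset P w v G :=
    upper_mem_Xset h0 (Finset.le_sup' (dotZ w) hV) hmem
  have := subset_convexHull ℝ _ (Set.mem_image_of_mem c2 hX)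
  rw [← S.hullR_Q] at this
  rwa [c2_add, c2_smul, c2_ι, c2_ι, show (((dotZ w V : ℤ) : ℚ) : ℝ) = (dotZ w V : ℝ) by
    push_cast; ring] at this

lemma MutScen.vert_push (S : MutScen P Q w v G) {V : NZ} (hV : V ∈ P.verts) :
    ∃ s : ℝ, 0 ≤ s ∧ s ≤ max 0 (-(dotZ w V : ℝ)) ∧ ιR V - s • ιR v ∈ Q.hullR := by
  rcases le_or_gt 0 (dotZ w V) with h0 | hneg
  · refine ⟨0, le_refl 0, le_max_left _ _, ?_⟩
    rw [zero_smul, sub_zero]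
    have hslice : ι V ∈ P.slice w (dotZ w V) :=
      subset_convexHull ℚ _ ⟨V, ⟨subset_convexHull ℚ _ (Set.mem_image_of_mem _ hV), rfl⟩, rfl⟩
    have hmem : ι V + 0 ∈ P.slice w (dotZ w V) + ((dotZ w V : ℤ) : ℚ) • factor v :=
      Set.add_mem_add hslice (zero_mem_smul_factor v _)
    rw [add_zero] at hmem
    have hX : ι V ∈ Xset P w v G :=
      upper_mem_Xset h0 (Finset.le_sup' (dotZ w) hV) hmem
    have := subset_convexHull ℝ _ (Set.mem_image_of_mem c2 hX)
    rw [← S.hullR_Q] at this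
    rwa [c2_ι] at this
  · have hm : P.hMin w ≤ dotZ w V := Finset.inf'_le (dotZ w) hV
    have h1 : dotZ w V ≤ -1 := by linarith
    have hVin := (S.hMD (dotZ w V) hm h1).2.1
    have : ι V ∈ G (dotZ w V) + ((|dotZ w V| : ℚ) • factor v) :=
      hVin (Set.mem_image_of_mem _ ⟨hV, rfl⟩)
    obtain ⟨g, hg, f, hf, heq⟩ := Set.mem_add.1 this
    obtain ⟨s', hs0, hsh, rfl⟩ := factor_mem_decomp (abs_nonneg _) hf
    refine ⟨(s' : ℝ), by exact_mod_cast hs0, ?_, ?_⟩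
    · have habs : |(dotZ w V : ℚ)| = -(dotZ w V : ℚ) :=
        abs_of_nonpos (by exact_mod_cast (show dotZ w V ≤ 0 by linarith))
      rw [habs] at hsh
      have hc : (s' : ℝ) ≤ -(dotZ w V : ℝ) := by exact_mod_cast hsh
      exact hc.trans (le_max_right _ _)
    · have hgX : g ∈ Xset P w v G := G_mem_Xset hm h1 hg
      have hgQ := subset_convexHull ℝ _ (Set.mem_image_of_mem c2 hgX)
      rw [← S.hullR_Q] at hgQ
      have : ιR V - (s' : ℝ) • ιR v = c2 g := by
        have h2 : c2 (ι V) = c2 g + (s' : ℝ) • ιR v := by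
          rw [← heq] at *
          rw [c2_add, c2_smul, c2_ι]
        rw [c2_ι] at h2
        rw [h2]; abel
      rw [this]
      exact hgQ

lemma ιR_sub (x y : NZ) : ιR (x - y) = ιR x - ιR y := by
  simp [ιR, Prod.ext_iff]

lemma ιR_add (x y : NZ) : ιR (x + y) = ιR x + ιR y := by
  simp [ιR, Prod.ext_iff]

lemma ιR_zsmul (j : ℤ) (x : NZ) : ιR (j • x) = (j : ℝ) • ιR x := by
  simp [ιR, Prod.ext_iff, Prod.smul_def]

lemma dotZ_zsmul (c : NZ) (j : ℤ) (x : NZ) : dotZ c (j • x) = j * dotZ c x := by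
  simp [dotZ, Prod.smul_def, smul_eq_mul]; ring

lemma vmax_w_eq (P : FanoPolygon) (w : NZ) :
    vmax P (w.1 : ℝ) (w.2 : ℝ) = (P.hMax w : ℝ) := by
  apply le_antisymm
  · apply Finset.sup'_le
    intro V hV
    rw [lf_ιR]
    exact_mod_cast Finset.le_sup' (dotZ w) hV
  · obtain ⟨V, hV, hVeq⟩ := Finset.exists_mem_eq_sup' P.verts_nonempty (dotZ w)
    have := le_vmax hV (w.1 : ℝ) (w.2 : ℝ)
    rw [lf_ιR, ← hVeq] at this
    exact this

lemma vmax_negw_eq (P : FanoPolygon) (w : NZ) :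
    vmax P (-(w.1 : ℝ)) (-(w.2 : ℝ)) = -(P.hMin w : ℝ) := by
  apply le_antisymm
  · apply Finset.sup'_le
    intro V hV
    rw [lf_neg, lf_ιR]
    have : P.hMin w ≤ dotZ w V := Finset.inf'_le (dotZ w) hV
    have h2 : (P.hMin w : ℝ) ≤ (dotZ w V : ℝ) := by exact_mod_cast this
    linarith
  · obtain ⟨V, hV, hVeq⟩ := Finset.exists_mem_eq_inf' P.verts_nonempty (dotZ w)
    have := le_vmax hV (-(w.1 : ℝ)) (-(w.2 : ℝ))
    rw [lf_neg, lf_ιR, ← hVeq] at this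
    exact this

lemma MutScen.Q_w_le (S : MutScen P Q w v G) :
    ∀ y ∈ Q.hullR, lf (w.1:ℝ) (w.2:ℝ) y ≤ (P.hMax w : ℝ) := by
  intro y hy
  have hA : 0 ≤ lf (w.1:ℝ) (w.2:ℝ) (ιR v) := by rw [S.lf_vR]
  have := S.Q_le_right hA y hy
  have hra : ra w v (w.1:ℝ) (w.2:ℝ) = (w.1:ℝ) := by rw [ra, S.lf_vR, mul_zero, add_zero]
  have hrb : rb w v (w.1:ℝ) (w.2:ℝ) = (w.2:ℝ) := by rw [rb, S.lf_vR, mul_zero, add_zero]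
  rw [hra, hrb, vmax_w_eq] at this
  exact this

lemma MutScen.Q_w_ge (S : MutScen P Q w v G) :
    ∀ y ∈ Q.hullR, (P.hMin w : ℝ) ≤ lf (w.1:ℝ) (w.2:ℝ) y := by
  intro y hy
  have hA : lf (-(w.1:ℝ)) (-(w.2:ℝ)) (ιR v) ≤ 0 := by rw [lf_neg, S.lf_vR, neg_zero]
  have := S.Q_le_left hA y hy
  rw [vmax_negw_eq, lf_neg] at this
  linarith

lemma MutScen.exists_bottom (S : MutScen P Q w v G) :
    ∃ t0 : NZ, ιR t0 ∈ Q.hullR ∧ dotZ w t0 = P.hMin w := by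
  have hm1 : P.hMin w ≤ -1 := by
    have := hMin_neg (P := P) S.hEN.1
    linarith
  -- a vertex of P at the bottom level
  have hcard := S.hEN.2
  have hne : (P.verts.filter (fun V => dotZ w V = P.hMin w)).Nonempty := by
    rw [← Finset.card_pos]; linarith
  obtain ⟨V0, hV0f⟩ := hne
  rw [Finset.mem_filter] at hV0f
  obtain ⟨hV0, hV0m⟩ := hV0f
  -- G (hMin) is nonempty
  have hMD0 := S.hMD (P.hMin w) le_rfl hm1
  have hV0G : ι V0 ∈ G (P.hMin w) + ((|(P.hMin w : ℚ)|) • factor v) :=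
    hMD0.2.1 (Set.mem_image_of_mem _ ⟨hV0, hV0m⟩)
  obtain ⟨g, hg, f, _, _⟩ := Set.mem_add.1 hV0G
  obtain ⟨T, hT⟩ := hMD0.1
  rw [hT] at hg
  have hTne : (ι '' (T : Set NZ)).Nonempty := by
    by_contra hemp
    rw [Set.not_nonempty_iff_eq_empty] at hemp
    rw [hemp, convexHull_empty] at hg
    exact hg
  obtain ⟨_, ⟨t0, ht0, rfl⟩⟩ := hTne
  have hιt0 : ι t0 ∈ G (P.hMin w) := by
    rw [hT]
    exact subset_convexHull ℚ _ (Set.mem_image_of_mem _ ht0)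
  refine ⟨t0, ?_, ?_⟩
  · have hX : ι t0 ∈ Xset P w v G := G_mem_Xset le_rfl hm1 hιt0
    have := subset_convexHull ℝ _ (Set.mem_image_of_mem c2 hX)
    rw [← S.hullR_Q] at this
    rwa [c2_ι] at this
  · have hsl : ι t0 ∈ P.slice w (P.hMin w) := S.G_subset_slice le_rfl hm1 hιt0
    have := slice_level hsl
    rw [dotQ_ι] at this
    exact_mod_cast this

lemma neg_pair_ne {w : NZ} (hw : Primitive w) : ¬(-(w.1 : ℝ) = 0 ∧ -(w.2 : ℝ) = 0) := by
  rintro ⟨h1, h2⟩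
  exact cast_pair_ne hw ⟨by linarith, by linarith⟩

/-- Oddness of a lattice point at the bottom level of `P`. -/
lemma odd_at_bottom {P : FanoPolygon} {c w : NZ} (hw : Primitive w)
    (hH : HinvWith P c) {x : NZ} (hx : ιR x ∈ P.hullR)
    (hlvl : dotZ w x = P.hMin w) : Odd (dotZ c x) := by
  apply odd_of_support hH hx (neg_pair_ne hw)
  intro y hy
  rw [lf_neg, lf_neg, lf_ιR, hlvl]
  have := hull_ge_hMin w y hy
  linarith

/-- Oddness of a lattice point at the top level of `P`. -/
lemma odd_at_top {P : FanoPolygon} {c w : NZ} (hw : Primitive w)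
    (hH : HinvWith P c) {x : NZ} (hx : ιR x ∈ P.hullR)
    (hlvl : dotZ w x = P.hMax w) : Odd (dotZ c x) := by
  apply odd_of_support hH hx (cast_pair_ne hw)
  intro y hy
  rw [lf_ιR, hlvl]
  exact hull_le_hMax w y hy

/-- forward parity facts. -/
lemma MutScen.fwd_facts (S : MutScen P Q w v G) {c : NZ} (hH : HinvWith P c) :
    Even (dotZ c v) ∧ (∀ x : NZ, (Even (dotZ c x) ↔ Even (dotZ w x))) ∧
      Odd (P.hMin w) ∧ Odd (P.hMax w) := by
  obtain ⟨hwprim, hcard⟩ := S.hEN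
  -- two distinct vertices at the bottom
  have h2 : 1 < (P.verts.filter (fun V => dotZ w V = P.hMin w)).card := by linarith
  rw [Finset.one_lt_card] at h2
  obtain ⟨V0, hV0f, V1, hV1f, hne⟩ := h2
  rw [Finset.mem_filter] at hV0f hV1f
  obtain ⟨hV0, hV0m⟩ := hV0f
  obtain ⟨hV1, hV1m⟩ := hV1f
  have hO0 : Odd (dotZ c V0) := odd_at_bottom hwprim hH (vert_mem_hullR hV0) hV0m
  have hO1 : Odd (dotZ c V1) := odd_at_bottom hwprim hH (vert_mem_hullR hV1) hV1m
  -- V0 - V1 = j • v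
  have hker : dotZ w (V0 - V1) = 0 := by rw [dotZ_sub, hV0m, hV1m, sub_self]
  obtain ⟨j, hj⟩ := ker_eq hwprim S.hvp S.hwv hker
  have hjne : j ≠ 0 := by
    rintro rfl
    rw [zero_smul, sub_eq_zero] at hj
    exact hne hj
  -- Even (dotZ c v)
  have hcv : Even (dotZ c v) := by
    by_contra hodd
    rw [Int.not_even_iff_odd] at hodd
    have hdiff : dotZ c V0 - dotZ c V1 = j * dotZ c v := by
      rw [← dotZ_sub, hj, dotZ_zsmul]
    have hjeven : Even j := by
      have heven : Even (j * dotZ c v) := by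
        rw [← hdiff]
        exact hO0.sub_odd hO1
      rcases Int.even_mul.1 heven with h | h
      · exact h
      · exact absurd h (Int.not_even_iff_odd.2 hodd)
    -- construct the point V0 ∓ v on the bottom edge
    set x2 : NZ := if 0 < j then V0 - v else V0 + v with hx2
    have hx2lvl : dotZ w x2 = P.hMin w := by
      rw [hx2]
      split_ifs
      · rw [dotZ_sub, S.hwv, hV0m, sub_zero]
      · have : dotZ w (V0 + v) = dotZ w V0 + dotZ w v := by simp [dotZ]; ring
        rw [this, S.hwv, hV0m, add_zero]
    have hx2even : Even (dotZ c x2) := by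
      rw [hx2]
      split_ifs
      · rw [dotZ_sub]
        exact hO0.sub_odd hodd
      · have : dotZ c (V0 + v) = dotZ c V0 + dotZ c v := by simp [dotZ]; ring
        rw [this]
        exact hO0.add_odd hodd
    have hx2mem : ιR x2 ∈ P.hullR := by
      have hjabs : (0:ℝ) < |(j:ℝ)| := by
        simp only [abs_pos]
        exact_mod_cast hjne
      set t : ℝ := |(j:ℝ)|⁻¹ with htdef
      have ht0 : 0 < t := by positivity
      have ht1 : t ≤ 1 := by
        rw [htdef]
        rw [inv_le_one_iff₀]
        right
        have h1j : (1:ℤ) ≤ |j| := Int.one_le_abs hjne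
        calc (1:ℝ) ≤ ((|j| : ℤ) : ℝ) := by exact_mod_cast h1j
          _ = |(j:ℝ)| := by rw [Int.cast_abs]
      have hcomb : (1 - t) • ιR V0 + t • ιR V1 ∈ P.hullR :=
        (convex_convexHull ℝ _) (vert_mem_hullR hV0) (vert_mem_hullR hV1)
          (by linarith) ht0.le (by ring)
      have hVR : ιR V1 = ιR V0 - (j:ℝ) • ιR v := by
        have : V1 = V0 - j • v := by
          rw [← hj]; abel
        rw [this, ιR_sub, ιR_zsmul]
      have hid : (1 - t) • ιR V0 + t • ιR V1 = ιR V0 - (t * (j:ℝ)) • ιR v := by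
        rw [hVR]
        rw [smul_sub, smul_smul]
        module
      have htj : t * (j:ℝ) = if 0 < j then 1 else -1 := by
        rw [htdef]
        split_ifs with hc
        · rw [abs_of_pos (by exact_mod_cast hc : (0:ℝ) < (j:ℝ))]
          field_simp
        · have hjneg : (j:ℝ) < 0 := by
            have : j < 0 := by omega
            exact_mod_cast this
          rw [abs_of_neg hjneg]
          field_simp
      have : (1 - t) • ιR V0 + t • ιR V1 = ιR x2 := by
        rw [hid, htj, hx2]
        split_ifs
        · rw [one_smul, ιR_sub]
        · rw [ιR_add, neg_smul, one_smul, sub_neg_eq_add]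
      rwa [this] at hcomb
    have := odd_at_bottom hwprim hH hx2mem hx2lvl
    rw [← Int.not_even_iff_odd] at this
    exact this hx2even
  -- dual vector
  obtain ⟨u, hu⟩ := prim_exists_dual hwprim
  obtain ⟨j0, hj0⟩ := decomp hwprim S.hvp S.hwv hu V0
  have hcV0 : dotZ c V0 = (dotZ w V0) * dotZ c u + j0 * dotZ c v := by
    conv_lhs => rw [hj0]
    simp [dotZ, Prod.smul_def, smul_eq_mul]; ring
  have hmcu : Odd ((dotZ w V0) * dotZ c u) := by
    have hjv : Even (j0 * dotZ c v) := hcv.mul_left j0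
    rw [hcV0] at hO0
    rcases Int.even_or_odd ((dotZ w V0) * dotZ c u) with h | h
    · exfalso
      have : Even ((dotZ w V0) * dotZ c u + j0 * dotZ c v) := h.add hjv
      rw [← Int.not_odd_iff_even] at this
      exact this hO0
    · exact h
  rw [Int.odd_mul] at hmcu
  obtain ⟨hmodd, hcuodd⟩ := hmcu
  rw [hV0m] at hmodd
  have hPAR := parity_iff hwprim S.hvp S.hwv hu hcv hcuodd
  refine ⟨hcv, hPAR, hmodd, ?_⟩
  -- hMax odd
  obtain ⟨Vt, hVt, hVteq⟩ := Finset.exists_mem_eq_sup' P.verts_nonempty (dotZ w)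
  have hOt : Odd (dotZ c Vt) := odd_at_top hwprim hH (vert_mem_hullR hVt) hVteq.symm
  have := (hPAR Vt)
  rw [show P.hMax w = dotZ w Vt from hVteq]
  rcases Int.even_or_odd (dotZ w Vt) with h | h
  · exfalso
    have := this.2 h
    rw [← Int.not_odd_iff_even] at this
    exact this hOt
  · exact h

lemma MutScen.odd_at_Qtop (S : MutScen P Q w v G) {c : NZ} (hHQ : HinvWith Q c)
    {x : NZ} (hx : ιR x ∈ Q.hullR) (hlvl : dotZ w x = P.hMax w) : Odd (dotZ c x) := by
  apply odd_of_support hHQ hx (cast_pair_ne S.hEN.1)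
  intro y hy
  rw [lf_ιR, hlvl]
  exact S.Q_w_le y hy

lemma MutScen.odd_at_Qbot (S : MutScen P Q w v G) {c : NZ} (hHQ : HinvWith Q c)
    {x : NZ} (hx : ιR x ∈ Q.hullR) (hlvl : dotZ w x = P.hMin w) : Odd (dotZ c x) := by
  apply odd_of_support hHQ hx (neg_pair_ne S.hEN.1)
  intro y hy
  rw [lf_neg, lf_neg, lf_ιR, hlvl]
  have := S.Q_w_ge y hy
  linarith

lemma MutScen.bwd_facts (S : MutScen P Q w v G) {c : NZ} (hHQ : HinvWith Q c) :
    Even (dotZ c v) ∧ (∀ x : NZ, (Even (dotZ c x) ↔ Even (dotZ w x))) ∧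
      Odd (P.hMin w) ∧ Odd (P.hMax w) := by
  have hwprim := S.hEN.1
  have hMpos : 0 < P.hMax w := hMax_pos (P := P) hwprim
  obtain ⟨Vt, hVt, hVteq'⟩ := Finset.exists_mem_eq_sup' P.verts_nonempty (dotZ w)
  have hVteq : dotZ w Vt = P.hMax w := hVteq'.symm
  -- Vt ∈ Q.hullR at top level
  have hVtmem : ιR Vt ∈ Q.hullR := by
    obtain ⟨s, hs0, hsle, hmem⟩ := S.vert_push hVt
    have : max 0 (-(dotZ w Vt : ℝ)) = 0 := by
      rw [max_eq_left]
      rw [hVteq]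
      have : (0:ℝ) < (P.hMax w : ℝ) := by exact_mod_cast hMpos
      linarith
    rw [this] at hsle
    have hs : s = 0 := le_antisymm hsle hs0
    rwa [hs, zero_smul, sub_zero] at hmem
  -- Vt + v ∈ Q.hullR at top level
  have hVtv : ιR (Vt + v) ∈ Q.hullR := by
    have hslice : ι Vt ∈ P.slice w (P.hMax w) := by
      rw [← hVteq]
      exact subset_convexHull ℚ _
        ⟨Vt, ⟨subset_convexHull ℚ _ (Set.mem_image_of_mem _ hVt), rfl⟩, rfl⟩
    have hfmem : (1 : ℚ) • ι v ∈ ((P.hMax w : ℤ) : ℚ) • factor v := by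
      apply smul_iv_mem_smul_factor v (by norm_num)
      exact_mod_cast hMpos
    have hmem : ι Vt + (1 : ℚ) • ι v
        ∈ P.slice w (P.hMax w) + ((P.hMax w : ℤ) : ℚ) • factor v :=
      Set.add_mem_add hslice hfmem
    have hX : ι Vt + (1:ℚ) • ι v ∈ Xset P w v G :=
      upper_mem_Xset hMpos.le le_rfl hmem
    have hQm := subset_convexHull ℝ _ (Set.mem_image_of_mem c2 hX)
    rw [← S.hullR_Q] at hQm
    rw [c2_add, c2_smul, c2_ι, c2_ι, show ((1:ℚ):ℝ) = 1 from by norm_num, one_smul] at hQm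
    rw [ιR_add]
    exact hQm
  have hVtvlvl : dotZ w (Vt + v) = P.hMax w := by
    have : dotZ w (Vt + v) = dotZ w Vt + dotZ w v := by simp [dotZ]; ring
    rw [this, S.hwv, add_zero, hVteq]
  have hOt : Odd (dotZ c Vt) := S.odd_at_Qtop hHQ hVtmem hVteq
  have hOtv : Odd (dotZ c (Vt + v)) := S.odd_at_Qtop hHQ hVtv hVtvlvl
  have hcv : Even (dotZ c v) := by
    have : dotZ c (Vt + v) = dotZ c Vt + dotZ c v := by simp [dotZ]; ring
    rw [this] at hOtv
    rcases Int.even_or_odd (dotZ c v) with h | h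
    · exact h
    · exfalso
      have := hOt.add_odd h
      rw [← Int.not_odd_iff_even] at this
      exact this hOtv
  obtain ⟨u, hu⟩ := prim_exists_dual hwprim
  obtain ⟨j0, hj0⟩ := decomp hwprim S.hvp S.hwv hu Vt
  have hcVt : dotZ c Vt = (dotZ w Vt) * dotZ c u + j0 * dotZ c v := by
    conv_lhs => rw [hj0]
    simp [dotZ, Prod.smul_def, smul_eq_mul]; ring
  have hmcu : Odd ((dotZ w Vt) * dotZ c u) := by
    have hjv : Even (j0 * dotZ c v) := hcv.mul_left j0
    rw [hcVt] at hOt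
    rcases Int.even_or_odd ((dotZ w Vt) * dotZ c u) with h | h
    · exfalso
      have := h.add hjv
      rw [← Int.not_odd_iff_even] at this
      exact this hOt
    · exact h
  rw [Int.odd_mul] at hmcu
  obtain ⟨hModd, hcuodd⟩ := hmcu
  rw [hVteq] at hModd
  have hPAR := parity_iff hwprim S.hvp S.hwv hu hcv hcuodd
  refine ⟨hcv, hPAR, ?_, hModd⟩
  -- hMin odd via bottom point of Q
  obtain ⟨t0, ht0mem, ht0lvl⟩ := S.exists_bottom
  have hOb : Odd (dotZ c t0) := S.odd_at_Qbot hHQ ht0mem ht0lvl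
  have := (hPAR t0)
  rw [← ht0lvl]
  rcases Int.even_or_odd (dotZ w t0) with h | h
  · exfalso
    have h2 := this.2 h
    rw [← Int.not_odd_iff_even] at h2
    exact h2 hOb
  · exact h

noncomputable def rfwd (w v : NZ) : R2 →ₗ[ℝ] R2 :=
  LinearMap.id + (lf (w.1:ℝ) (w.2:ℝ)).smulRight (ιR v)

lemma rfwd_apply (w v : NZ) (x : R2) :
    rfwd w v x = x + lf (w.1:ℝ) (w.2:ℝ) x • ιR v := rfl

lemma MutScen.Q_le_j (S : MutScen P Q w v G) {α β : ℝ}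
    (hA : 0 ≤ lf α β (ιR v)) :
    ∀ y ∈ Q.hullR, lf (ja w v α β) (jb w v α β) y ≤ vmax P α β := by
  have h := S.Q_le_right (a := ja w v α β) (b := jb w v α β)
    (by rw [S.lf_j_vR]; exact hA)
  rwa [S.r_of_j_a, S.r_of_j_b] at h

/-- push the argmax face of `P` through a linear map. -/
lemma argmax_push {P : FanoPolygon} {α β : ℝ} {x : R2} (hx : x ∈ P.hullR)
    (hmax : lf α β x = vmax P α β) (L : R2 →ₗ[ℝ] R2) {T : Set R2} (hT : Convex ℝ T)
    (hV : ∀ V ∈ P.verts, lf α β (ιR V) = vmax P α β → L (ιR V) ∈ T) : L x ∈ T := by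
  obtain ⟨ι', t, wt, z, hw, h1, hz, hsum⟩ := exists_pos_combo hx
  have hle : ∀ i ∈ t, lf α β (z i) ≤ vmax P α β := by
    intro i hi
    obtain ⟨V, hVm, hVe⟩ := hz i hi
    rw [← hVe]
    exact le_vmax hVm α β
  have hfx : ∑ i ∈ t, wt i * lf α β (z i) = vmax P α β := by
    rw [← hmax, ← hsum, map_sum]
    exact Finset.sum_congr rfl (fun i _ => by rw [map_smul, smul_eq_mul])
  have heach := combo_forces hw h1 hle hfx
  have hmem : ∀ i ∈ t, L (z i) ∈ T := by
    intro i hi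
    obtain ⟨V, hVm, hVe⟩ := hz i hi
    exact hVe ▸ hV V hVm (by rw [hVe]; exact heach i hi)
  have hLx : L x = ∑ i ∈ t, wt i • L (z i) := by
    rw [← hsum, map_sum]
    exact Finset.sum_congr rfl (fun i _ => by rw [map_smul])
  rw [hLx]
  exact Convex.sum_mem hT (fun i hi => (hw i hi).le) h1 hmem

lemma MutScen.parallel_case (S : MutScen P Q w v G) {α β : ℝ} (hne : ¬(α = 0 ∧ β = 0))
    (hA : lf α β (ιR v) = 0) :
    ∃ t : ℝ, t ≠ 0 ∧ ∀ y : R2, lf α β y = t * lf (w.1:ℝ) (w.2:ℝ) y := by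
  have hv12 : ¬((v.1:ℝ) = 0 ∧ (v.2:ℝ) = 0) := cast_pair_ne S.hvp
  have hwv' : (w.1:ℝ) * (v.1:ℝ) + (w.2:ℝ) * (v.2:ℝ) = 0 := by
    have := S.lf_vR
    simpa [lf_apply, ιR] using this
  have hA' : α * (v.1:ℝ) + β * (v.2:ℝ) = 0 := by
    simpa [lf_apply, ιR] using hA
  have hcross : α * (w.2:ℝ) = β * (w.1:ℝ) := by
    rcases not_and_or.1 hv12 with h | h
    · have hz : (α * (w.2:ℝ) - β * (w.1:ℝ)) * (v.1:ℝ) = 0 := by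
        linear_combination (w.2:ℝ) * hA' - β * hwv'
      rcases mul_eq_zero.1 hz with h' | h'
      · linarith
      · exact absurd h' h
    · have hz : (α * (w.2:ℝ) - β * (w.1:ℝ)) * (v.2:ℝ) = 0 := by
        linear_combination (-(w.1:ℝ)) * hA' + α * hwv'
      rcases mul_eq_zero.1 hz with h' | h'
      · linarith
      · exact absurd h' h
  rcases not_and_or.1 (cast_pair_ne S.hEN.1) with hw1 | hw2
  · refine ⟨α / (w.1:ℝ), ?_, ?_⟩
    · intro h0
      rw [div_eq_zero_iff] at h0
      rcases h0 with h0 | h0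
      · apply hne
        refine ⟨h0, ?_⟩
        rw [h0] at hcross
        simp at hcross
        rcases hcross with h | h
        · exact h
        · exact absurd (show (w.1:ℝ) = 0 by exact_mod_cast h) hw1
      · exact hw1 h0
    · intro y
      simp only [lf_apply]
      rw [div_mul_eq_mul_div, eq_comm, div_eq_iff hw1]
      linear_combination (y.2) * hcross
  · refine ⟨β / (w.2:ℝ), ?_, ?_⟩
    · intro h0
      rw [div_eq_zero_iff] at h0
      rcases h0 with h0 | h0
      · apply hne
        refine ⟨?_, h0⟩
        rw [h0] at hcross
        simp at hcross
        rcases hcross with h | h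
        · exact h
        · exact absurd (show (w.2:ℝ) = 0 by exact_mod_cast h) hw2
      · exact hw2 h0
    · intro y
      simp only [lf_apply]
      rw [div_mul_eq_mul_div, eq_comm, div_eq_iff hw2]
      linear_combination (-(y.1)) * hcross

/-- Forward transfer of the parity invariant along a mutation. -/
lemma MutScen.transfer_fwd (S : MutScen P Q w v G) {c : NZ}
    (hH : HinvWith P c) : HinvWith Q c := by
  obtain ⟨hcv, hPAR, hmodd, hModd⟩ := S.fwd_facts hH
  intro q hq heven
  by_contra hni
  obtain ⟨α, β, hne, hmax⟩ := exists_support (convex_convexHull ℝ _)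
    (zero_mem_interior_hullR Q) hni
  rcases lt_trichotomy (lf α β (ιR v)) 0 with hA | hA | hA
  · -- A < 0
    have hb := S.Q_le_left hA.le
    obtain ⟨Vm, hVm, hVmax⟩ := vmax_attained P α β
    obtain ⟨s, hs0, _, hmem⟩ := S.vert_push hVm
    have hsA : s * lf α β (ιR v) ≤ 0 := by
      have := mul_le_mul_of_nonneg_left hA.le hs0
      rwa [mul_zero] at this
    have hval : lf α β (ιR Vm - s • ιR v) = lf α β (ιR Vm) - s * lf α β (ιR v) := by
      rw [map_sub, map_smul, smul_eq_mul]
    have h1 : vmax P α β ≤ lf α β (ιR q) := by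
      have h2 := hmax _ hmem
      rw [hval] at h2
      linarith [hVmax]
    have hqmax : lf α β (ιR q) = vmax P α β := le_antisymm (hb _ hq) h1
    have hqP : ιR q ∈ P.hullR := S.Q_max_left hA hq hqmax
    have hint := hH q hqP heven
    refine hne (ni hint ?_)
    intro y hy
    rw [hqmax]
    exact hull_le_vmax α β y hy
  · -- A = 0
    obtain ⟨t, ht0, hts⟩ := S.parallel_case hne hA
    rcases lt_or_gt_of_ne ht0 with htneg | htpos
    · -- t < 0 : q sits at the bottom level, which is odd
      obtain ⟨t0, ht0mem, ht0lvl⟩ := S.exists_bottom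
      have hc := hmax _ ht0mem
      rw [hts, hts, lf_ιR, lf_ιR, ht0lvl] at hc
      have hlow : (dotZ w q : ℝ) ≤ (P.hMin w : ℝ) := by nlinarith
      have hge : (P.hMin w : ℝ) ≤ (dotZ w q : ℝ) := by
        have := S.Q_w_ge _ hq
        rwa [lf_ιR] at this
      have hqm : dotZ w q = P.hMin w := by exact_mod_cast le_antisymm hlow hge
      have heq := (hPAR q).1 heven
      rw [hqm, ← Int.not_odd_iff_even] at heq
      exact heq hmodd
    · -- 0 < t : q sits at the top level, which is odd
      obtain ⟨Vt, hVt, hVteq'⟩ := Finset.exists_mem_eq_sup' P.verts_nonempty (dotZ w)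
      have hVteq : dotZ w Vt = P.hMax w := hVteq'.symm
      have hMpos : 0 < P.hMax w := hMax_pos (P := P) S.hEN.1
      have hpush := S.vert_push_upper hVt (by rw [hVteq]; exact hMpos.le)
      have hlvl : lf (w.1:ℝ) (w.2:ℝ) (ιR Vt + (dotZ w Vt:ℝ) • ιR v) = (P.hMax w : ℝ) := by
        rw [map_add, map_smul, smul_eq_mul, S.lf_vR, mul_zero, add_zero, lf_ιR, hVteq]
      have hc := hmax _ hpush
      rw [hts, hts, lf_ιR, hlvl] at hc
      have hhigh : (P.hMax w : ℝ) ≤ (dotZ w q : ℝ) := by nlinarith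
      have hle : (dotZ w q : ℝ) ≤ (P.hMax w : ℝ) := by
        have := S.Q_w_le _ hq
        rwa [lf_ιR] at this
      have hqm : dotZ w q = P.hMax w := by exact_mod_cast le_antisymm hle hhigh
      have heq := (hPAR q).1 heven
      rw [hqm, ← Int.not_odd_iff_even] at heq
      exact heq hModd
  · -- 0 < A
    have hb := S.Q_le_right hA.le
    obtain ⟨Vm, hVm, hVmax⟩ := vmax_attained P (ra w v α β) (rb w v α β)
    have h1 : vmax P (ra w v α β) (rb w v α β) ≤ lf α β (ιR q) := by
      rcases le_or_gt 0 (dotZ w Vm) with h0 | hneg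
      · have hpush := S.vert_push_upper hVm h0
        have hc := hmax _ hpush
        have hval : lf α β (ιR Vm + (dotZ w Vm:ℝ) • ιR v)
            = lf (ra w v α β) (rb w v α β) (ιR Vm) := by
          rw [map_add, map_smul, smul_eq_mul, lf_r, lf_ιR]
        rw [hval, hVmax] at hc
        exact hc
      · obtain ⟨s, hs0, hsle, hmem⟩ := S.vert_push hVm
        have hc := hmax _ hmem
        have hval : lf α β (ιR Vm - s • ιR v) = lf α β (ιR Vm) - s * lf α β (ιR v) := by
          rw [map_sub, map_smul, smul_eq_mul]
        have hrval : lf (ra w v α β) (rb w v α β) (ιR Vm)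
            = lf α β (ιR Vm) + (dotZ w Vm : ℝ) * lf α β (ιR v) := by
          rw [lf_r, lf_ιR]
        have hsle' : s ≤ -(dotZ w Vm : ℝ) := by
          have hmx : max 0 (-(dotZ w Vm:ℝ)) = -(dotZ w Vm:ℝ) := by
            rw [max_eq_right]
            have : (dotZ w Vm : ℝ) < 0 := by exact_mod_cast hneg
            linarith
          rwa [hmx] at hsle
        have hprod : (dotZ w Vm : ℝ) * lf α β (ιR v) ≤ (-s) * lf α β (ιR v) := by
          apply mul_le_mul_of_nonneg_right _ hA.le
          linarith
        rw [hval] at hc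
        rw [← hVmax] at *
        linarith [hrval]
    have hqmax : lf α β (ιR q) = vmax P (ra w v α β) (rb w v α β) :=
      le_antisymm (hb _ hq) h1
    have hq' := S.Q_max_right hA hq hqmax
    have hqtR : ιR (q - (dotZ w q) • v) = ιR q - lf (w.1:ℝ) (w.2:ℝ) (ιR q) • ιR v := by
      rw [ιR_sub, ιR_zsmul, lf_ιR]
    have hqtmem : ιR (q - (dotZ w q) • v) ∈ P.hullR := by rw [hqtR]; exact hq'
    have hqteven : Even (dotZ c (q - (dotZ w q) • v)) := by
      rw [dotZ_sub, dotZ_zsmul]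
      exact heven.sub (hcv.mul_left _)
    have hint := hH _ hqtmem hqteven
    have hwqt : dotZ w (q - (dotZ w q) • v) = dotZ w q := by
      rw [dotZ_sub, dotZ_zsmul, S.hwv, mul_zero, sub_zero]
    have hsupp : ∀ y ∈ P.hullR, lf (ra w v α β) (rb w v α β) y
        ≤ lf (ra w v α β) (rb w v α β) (ιR (q - (dotZ w q) • v)) := by
      intro y hy
      have hval : lf (ra w v α β) (rb w v α β) (ιR (q - (dotZ w q) • v))
          = lf α β (ιR q) := by
        rw [lf_r, lf_ιR, hwqt, hqtR, map_sub, map_smul, smul_eq_mul, lf_ιR]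
        ring
      rw [hval, hqmax]
      exact hull_le_vmax _ _ y hy
    obtain ⟨h1r, h2r⟩ := ni hint hsupp
    -- derive A = 0, contradiction
    have hwv' : (w.1:ℝ) * (v.1:ℝ) + (w.2:ℝ) * (v.2:ℝ) = 0 := by
      have := S.lf_vR
      simpa [lf_apply, ιR] using this
    have hA0 : lf α β (ιR v) = 0 := by
      rw [ra] at h1r
      rw [rb] at h2r
      simp only [lf_apply, ιR] at h1r h2r ⊢
      linear_combination (v.1:ℝ) * h1r + (v.2:ℝ) * h2r
        - (α * (v.1:ℝ) + β * (v.2:ℝ)) * hwv'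
    linarith

/-- Backward transfer of the parity invariant along a mutation. -/
lemma MutScen.transfer_bwd (S : MutScen P Q w v G) {c : NZ}
    (hHQ : HinvWith Q c) : HinvWith P c := by
  obtain ⟨hcv, hPAR, hmodd, hModd⟩ := S.bwd_facts hHQ
  intro p hp heven
  by_contra hni
  obtain ⟨α, β, hne, hmax⟩ := exists_support (convex_convexHull ℝ _)
    (zero_mem_interior_hullR P) hni
  have hvmax_eq : vmax P α β = lf α β (ιR p) :=
    le_antisymm (Finset.sup'_le _ _ fun V hV => hmax _ (vert_mem_hullR hV))
      (hull_le_vmax α β _ hp)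
  rcases lt_trichotomy (lf α β (ιR v)) 0 with hA | hA | hA
  · -- A < 0 : p survives into Q
    have hpQ : ιR p ∈ Q.hullR := by
      have := argmax_push hp hvmax_eq.symm LinearMap.id (convex_convexHull ℝ _)
        (T := Q.hullR) ?_
      · simpa using this
      · intro V hV hVmx
        obtain ⟨s, hs0, _, hmem⟩ := S.vert_push hV
        have hbound := S.Q_le_left hA.le _ hmem
        have hval : lf α β (ιR V - s • ιR v) = lf α β (ιR V) - s * lf α β (ιR v) := by
          rw [map_sub, map_smul, smul_eq_mul]
        have hsA : s * lf α β (ιR v) ≤ 0 := by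
          have := mul_le_mul_of_nonneg_left hA.le hs0
          rwa [mul_zero] at this
        have hs0' : s * lf α β (ιR v) = 0 := by
          rw [hval, hVmx] at hbound
          linarith
        have hsz : s = 0 := by
          rcases mul_eq_zero.1 hs0' with h' | h'
          · exact h'
          · exact absurd h' hA.ne
        rw [hsz, zero_smul, sub_zero] at hmem
        simpa using hmem
    have hint := hHQ p hpQ heven
    refine hne (ni hint ?_)
    intro y hy
    have := S.Q_le_left hA.le y hy
    rw [hvmax_eq] at this
    exact this
  · -- A = 0 : p is at an extreme (odd) level
    obtain ⟨t, ht0, hts⟩ := S.parallel_case hne hA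
    rcases lt_or_gt_of_ne ht0 with htneg | htpos
    · -- t < 0 : p at the bottom level of P
      obtain ⟨V0, hV0, hV0eq'⟩ := Finset.exists_mem_eq_inf' P.verts_nonempty (dotZ w)
      have hc := hmax _ (vert_mem_hullR hV0)
      rw [hts, hts, lf_ιR, lf_ιR, ← hV0eq'] at hc
      rw [show P.verts.inf' P.verts_nonempty (dotZ w) = P.hMin w from rfl] at hc
      have hlow : (dotZ w p : ℝ) ≤ (P.hMin w : ℝ) := by nlinarith
      have hge : (P.hMin w : ℝ) ≤ (dotZ w p : ℝ) := by
        have := hull_ge_hMin w _ hp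
        rwa [lf_ιR] at this
      have hqm : dotZ w p = P.hMin w := by exact_mod_cast le_antisymm hlow hge
      have heq := (hPAR p).1 heven
      rw [hqm, ← Int.not_odd_iff_even] at heq
      exact heq hmodd
    · -- 0 < t : p at the top level of P
      obtain ⟨Vt, hVt, hVteq'⟩ := Finset.exists_mem_eq_sup' P.verts_nonempty (dotZ w)
      have hc := hmax _ (vert_mem_hullR hVt)
      rw [hts, hts, lf_ιR, lf_ιR, ← hVteq'] at hc
      rw [show P.verts.sup' P.verts_nonempty (dotZ w) = P.hMax w from rfl] at hc
      have hhigh : (P.hMax w : ℝ) ≤ (dotZ w p : ℝ) := by nlinarith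
      have hle : (dotZ w p : ℝ) ≤ (P.hMax w : ℝ) := by
        have := hull_le_hMax w _ hp
        rwa [lf_ιR] at this
      have hqm : dotZ w p = P.hMax w := by exact_mod_cast le_antisymm hle hhigh
      have heq := (hPAR p).1 heven
      rw [hqm, ← Int.not_odd_iff_even] at heq
      exact heq hModd
  · -- 0 < A : the sheared point survives into Q
    have hpush : rfwd w v (ιR p) ∈ Q.hullR := by
      apply argmax_push hp hvmax_eq.symm (rfwd w v) (convex_convexHull ℝ _)
      intro V hV hVmx
      rcases le_or_gt 0 (dotZ w V) with h0 | hneg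
      · have := S.vert_push_upper hV h0
        rwa [rfwd_apply, lf_ιR]
      · obtain ⟨s, hs0, hsle, hmem⟩ := S.vert_push hV
        have hsle' : s ≤ -(dotZ w V : ℝ) := by
          have hmx : max 0 (-(dotZ w V:ℝ)) = -(dotZ w V:ℝ):= by
            rw [max_eq_right]
            have : (dotZ w V : ℝ) < 0 := by exact_mod_cast hneg
            linarith
          rwa [hmx] at hsle
        -- evaluate the j-functional on the pushed point
        have hbound := S.Q_le_j hA.le _ hmem
        have hwV : lf (w.1:ℝ) (w.2:ℝ) (ιR V - s • ιR v) = (dotZ w V : ℝ) := by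
          rw [map_sub, map_smul, smul_eq_mul, S.lf_vR, mul_zero, sub_zero, lf_ιR]
        have hval : lf (ja w v α β) (jb w v α β) (ιR V - s • ιR v)
            = lf α β (ιR V) - (s + (dotZ w V : ℝ)) * lf α β (ιR v) := by
          rw [lf_j, hwV, map_sub, map_smul, smul_eq_mul]
          ring
        have hge : vmax P α β ≤ lf (ja w v α β) (jb w v α β) (ιR V - s • ιR v) := by
          rw [hval, ← hVmx]
          have hsh : s + (dotZ w V : ℝ) ≤ 0 := by linarith
          nlinarith
        have heq : lf (ja w v α β) (jb w v α β) (ιR V - s • ιR v) = vmax P α β :=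
          le_antisymm hbound hge
        have hz : (s + (dotZ w V : ℝ)) * lf α β (ιR v) = 0 := by
          rw [hval, ← hVmx] at heq
          linarith
        have hsz : s = -(dotZ w V : ℝ) := by
          rcases mul_eq_zero.1 hz with h' | h'
          · linarith
          · exact absurd h' hA.ne'
        rw [rfwd_apply, lf_ιR]
        rw [hsz] at hmem
        have : ιR V - -(dotZ w V : ℝ) • ιR v = ιR V + (dotZ w V : ℝ) • ιR v := by
          rw [neg_smul, sub_neg_eq_add]
        rwa [this] at hmem
    -- the sheared lattice point
    have hptR : ιR (p + (dotZ w p) • v) = rfwd w v (ιR p) := by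
      rw [ιR_add, ιR_zsmul, rfwd_apply, lf_ιR]
    have hptmem : ιR (p + (dotZ w p) • v) ∈ Q.hullR := by rw [hptR]; exact hpush
    have hpteven : Even (dotZ c (p + (dotZ w p) • v)) := by
      rw [dotZ_add, dotZ_zsmul]
      exact heven.add (hcv.mul_left _)
    have hwpt : dotZ w (p + (dotZ w p) • v) = dotZ w p := by
      rw [dotZ_add, dotZ_zsmul, S.hwv, mul_zero, add_zero]
    have hint := hHQ _ hptmem hpteven
    have hsupp : ∀ y ∈ Q.hullR, lf (ja w v α β) (jb w v α β) y
        ≤ lf (ja w v α β) (jb w v α β) (ιR (p + (dotZ w p) • v)) := by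
      intro y hy
      have hval : lf (ja w v α β) (jb w v α β) (ιR (p + (dotZ w p) • v))
          = lf α β (ιR p) := by
        rw [lf_j, lf_ιR, hwpt, ιR_add, ιR_zsmul, map_add, map_smul, smul_eq_mul]
        ring
      rw [hval, ← hvmax_eq]
      exact S.Q_le_j hA.le y hy
    obtain ⟨h1j, h2j⟩ := ni hint hsupp
    have hwv' : (w.1:ℝ) * (v.1:ℝ) + (w.2:ℝ) * (v.2:ℝ) = 0 := by
      have := S.lf_vR
      simpa [lf_apply, ιR] using this
    have hA0 : lf α β (ιR v) = 0 := by
      rw [ja] at h1j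
      rw [jb] at h2j
      simp only [lf_apply, ιR] at h1j h2j ⊢
      linear_combination (v.1:ℝ) * h1j + (v.2:ℝ) * h2j
        + (α * (v.1:ℝ) + β * (v.2:ℝ)) * hwv'
    linarith

/-! ### GL transfer -/

/-- realification of an integral linear auto. -/
noncomputable def glR (f : NZ ≃ₗ[ℤ] NZ) : R2 →ₗ[ℝ] R2 where
  toFun x := (x.1 * (ιR (f (1, 0))).1 + x.2 * (ιR (f (0, 1))).1,
              x.1 * (ιR (f (1, 0))).2 + x.2 * (ιR (f (0, 1))).2)
  map_add' x y := by
    rw [Prod.ext_iff]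
    constructor <;> simp <;> ring
  map_smul' t x := by
    rw [Prod.ext_iff]
    constructor <;> simp [Prod.smul_def] <;> ring

lemma nz_decomp (x : NZ) : x = x.1 • ((1, 0) : NZ) + x.2 • ((0, 1) : NZ) := by
  simp [Prod.ext_iff, Prod.smul_def]

lemma glR_ιR (f : NZ ≃ₗ[ℤ] NZ) (x : NZ) : glR f (ιR x) = ιR (f x) := by
  have hfx : f x = x.1 • f (1, 0) + x.2 • f (0, 1) := by
    conv_lhs => rw [nz_decomp x]
    rw [map_add, map_smul, map_smul]
  rw [hfx, ιR_add, ιR_zsmul, ιR_zsmul]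
  rw [Prod.ext_iff]
  constructor <;> simp [glR, ιR, Prod.smul_def]

lemma glR_inv (f : NZ ≃ₗ[ℤ] NZ) (x : R2) : glR f.symm (glR f x) = x := by
  have h1 : glR f x = x.1 • ιR (f (1,0)) + x.2 • ιR (f (0,1)) := by
    rw [Prod.ext_iff]
    constructor <;> simp [glR, Prod.smul_def]
  rw [h1, map_add, map_smul, map_smul, glR_ιR, glR_ιR, f.symm_apply_apply,
    f.symm_apply_apply]
  rw [Prod.ext_iff]
  constructor <;> simp [ιR, Prod.smul_def]

/-- `glR f` as a linear equivalence. -/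
noncomputable def glE (f : NZ ≃ₗ[ℤ] NZ) : R2 ≃ₗ[ℝ] R2 :=
  LinearEquiv.ofLinear (glR f) (glR f.symm)
    (LinearMap.ext fun x => by simpa using glR_inv f.symm x)
    (LinearMap.ext fun x => glR_inv f x)

lemma glE_apply (f : NZ ≃ₗ[ℤ] NZ) (x : R2) : glE f x = glR f x := rfl

lemma gl_hullR {P Q : FanoPolygon} (f : NZ ≃ₗ[ℤ] NZ) (hQ : Q.verts = P.verts.image f) :
    Q.hullR = glR f '' P.hullR := by
  rw [FanoPolygon.hullR, FanoPolygon.hullR, LinearMap.image_convexHull]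
  congr 1
  rw [hQ]
  ext y
  constructor
  · rintro ⟨x, hx, rfl⟩
    rw [Finset.coe_image] at hx
    obtain ⟨x0, hx0, rfl⟩ := hx
    exact ⟨ιR x0, Set.mem_image_of_mem _ hx0, glR_ιR f x0⟩
  · rintro ⟨y0, ⟨x0, hx0, rfl⟩, rfl⟩
    refine ⟨f x0, ?_, (glR_ιR f x0).symm⟩
    rw [Finset.coe_image]
    exact Set.mem_image_of_mem _ hx0

lemma gl_transfer {P Q : FanoPolygon} (f : NZ ≃ₗ[ℤ] NZ)
    (hQ : Q.verts = P.verts.image f) : Hinv P → Hinv Q := by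
  rintro ⟨c, hc⟩
  refine ⟨(dotZ c (f.symm (1, 0)), dotZ c (f.symm (0, 1))), ?_⟩
  have hpar : ∀ x : NZ,
      dotZ (dotZ c (f.symm (1, 0)), dotZ c (f.symm (0, 1))) x = dotZ c (f.symm x) := by
    intro x
    have hsx : f.symm x = x.1 • f.symm (1, 0) + x.2 • f.symm (0, 1) := by
      conv_lhs => rw [nz_decomp x]
      rw [map_add, map_smul, map_smul]
    rw [hsx, dotZ_add, dotZ_zsmul, dotZ_zsmul]
    simp [dotZ]
    ring
  intro x hx heven
  rw [hpar] at heven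
  have hmemP : ιR (f.symm x) ∈ P.hullR := by
    rw [gl_hullR f hQ] at hx
    obtain ⟨z, hz, hzx⟩ := hx
    have hze : z = glR f.symm (ιR x) := by rw [← hzx, glR_inv]
    rw [glR_ιR] at hze
    rwa [← hze]
  have hint := hc (f.symm x) hmemP heven
  have hhom : Q.hullR = (glE f).toContinuousLinearEquiv.toHomeomorph '' P.hullR := by
    rw [gl_hullR f hQ]
    rfl
  rw [hhom, ← Homeomorph.image_interior]
  refine ⟨ιR (f.symm x), hint, ?_⟩
  show glE f (ιR (f.symm x)) = ιR x
  rw [glE_apply, glR_ιR, f.apply_symm_apply]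

/-! ### Base cases -/

lemma Hinv_square (R : FanoPolygon)
    (hv : R.verts = ({(1,0),(0,1),(-1,0),(0,-1)} : Finset NZ)) : Hinv R := by
  refine ⟨(1, 1), ?_⟩
  intro x hx heven
  have hx' : ιR x ∈ convexHull ℝ (ιR '' (({(1,0),(0,1),(-1,0),(0,-1)} : Finset NZ) : Set NZ)) := by
    rw [FanoPolygon.hullR, hv] at hx
    exact hx
  have hb : ∀ a b : ℝ,
      (∀ W ∈ (({(1,0),(0,1),(-1,0),(0,-1)} : Finset NZ) : Set NZ), lf a b (ιR W) ≤ 1) →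
      lf a b (ιR x) ≤ 1 := by
    intro a b hW
    refine hull_le ?_ _ hx'
    rintro z ⟨W, hWm, rfl⟩
    exact hW W hWm
  have hmem : ∀ (a b : ℝ), (lf a b (ιR ((1,0) : NZ)) ≤ 1) → (lf a b (ιR ((0,1) : NZ)) ≤ 1) →
      (lf a b (ιR ((-1,0) : NZ)) ≤ 1) → (lf a b (ιR ((0,-1) : NZ)) ≤ 1) →
      lf a b (ιR x) ≤ 1 := by
    intro a b h1 h2 h3 h4
    apply hb
    intro W hWm
    simp only [Finset.coe_insert, Set.mem_insert_iff, Finset.coe_singleton,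
      Set.mem_singleton_iff] at hWm
    rcases hWm with rfl | rfl | rfl | rfl <;> assumption
  have e1 : (x.1 : ℝ) + (x.2 : ℝ) ≤ 1 := by
    have := hmem 1 1 (by norm_num [lf_apply, ιR]) (by norm_num [lf_apply, ιR])
      (by norm_num [lf_apply, ιR]) (by norm_num [lf_apply, ιR])
    simpa [lf_apply, ιR] using this
  have e2 : (x.1 : ℝ) - (x.2 : ℝ) ≤ 1 := by
    have := hmem 1 (-1) (by norm_num [lf_apply, ιR]) (by norm_num [lf_apply, ιR])
      (by norm_num [lf_apply, ιR]) (by norm_num [lf_apply, ιR])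
    have h2 : (1:ℝ) * (x.1:ℝ) + (-1) * (x.2:ℝ) ≤ 1 := by simpa [lf_apply, ιR] using this
    linarith
  have e3 : -(x.1 : ℝ) + (x.2 : ℝ) ≤ 1 := by
    have := hmem (-1) 1 (by norm_num [lf_apply, ιR]) (by norm_num [lf_apply, ιR])
      (by norm_num [lf_apply, ιR]) (by norm_num [lf_apply, ιR])
    have h2 : (-1:ℝ) * (x.1:ℝ) + 1 * (x.2:ℝ) ≤ 1 := by simpa [lf_apply, ιR] using this
    linarith
  have e4 : -(x.1 : ℝ) - (x.2 : ℝ) ≤ 1 := by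
    have := hmem (-1) (-1) (by norm_num [lf_apply, ιR]) (by norm_num [lf_apply, ιR])
      (by norm_num [lf_apply, ιR]) (by norm_num [lf_apply, ιR])
    have h2 : (-1:ℝ) * (x.1:ℝ) + (-1) * (x.2:ℝ) ≤ 1 := by simpa [lf_apply, ιR] using this
    linarith
  have z1 : x.1 + x.2 ≤ 1 := by exact_mod_cast e1
  have z2 : x.1 - x.2 ≤ 1 := by exact_mod_cast e2
  have z3 : -x.1 + x.2 ≤ 1 := by exact_mod_cast e3
  have z4 : -x.1 - x.2 ≤ 1 := by exact_mod_cast e4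
  have hev : Even (x.1 + x.2) := by
    have : dotZ (1,1) x = x.1 + x.2 := by simp [dotZ]
    rwa [this] at heven
  obtain ⟨r, hr⟩ := hev
  have hx1 : x.1 = 0 ∧ x.2 = 0 := by omega
  have hx0 : ιR x = (0 : R2) := by
    rw [Prod.ext_iff]
    constructor <;> simp [ιR, hx1.1, hx1.2]
  rw [hx0]
  exact zero_mem_interior_hullR R

lemma not_Hinv_F1 (R : FanoPolygon)
    (hv : R.verts = ({(1,0),(0,1),(-1,-1),(0,-1)} : Finset NZ)) : ¬ Hinv R := by
  rintro ⟨c, hc⟩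
  have hvmem : ∀ V : NZ, V ∈ ({(1,0),(0,1),(-1,-1),(0,-1)} : Finset NZ) → V ∈ R.verts := by
    intro V hV; rwa [hv]
  have hsup : ∀ (a b : ℝ) (V : NZ), V ∈ R.verts → ¬(a = 0 ∧ b = 0) →
      (∀ W ∈ (({(1,0),(0,1),(-1,-1),(0,-1)} : Finset NZ) : Set NZ),
        lf a b (ιR W) ≤ lf a b (ιR V)) → Odd (dotZ c V) := by
    intro a b V hV hne hball
    apply odd_of_support hc (vert_mem_hullR hV) hne
    intro y hy
    rw [FanoPolygon.hullR, hv] at hy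
    refine hull_le ?_ _ hy
    rintro z ⟨W, hWm, rfl⟩
    exact hball W hWm
  have hW4 : ∀ (a b : ℝ) (V : NZ),
      (lf a b (ιR ((1,0):NZ)) ≤ lf a b (ιR V)) → (lf a b (ιR ((0,1):NZ)) ≤ lf a b (ιR V)) →
      (lf a b (ιR ((-1,-1):NZ)) ≤ lf a b (ιR V)) → (lf a b (ιR ((0,-1):NZ)) ≤ lf a b (ιR V)) →
      ∀ W ∈ (({(1,0),(0,1),(-1,-1),(0,-1)} : Finset NZ) : Set NZ),
        lf a b (ιR W) ≤ lf a b (ιR V) := by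
    intro a b V h1 h2 h3 h4 W hWm
    simp only [Finset.coe_insert, Set.mem_insert_iff, Finset.coe_singleton,
      Set.mem_singleton_iff] at hWm
    rcases hWm with rfl | rfl | rfl | rfl <;> assumption
  have hodd1 : Odd (dotZ c (1, 0)) := by
    apply hsup 1 (-1) (1,0) (hvmem _ (by norm_num)) (by norm_num)
    apply hW4 <;> norm_num [lf_apply, ιR]
  have hodd2 : Odd (dotZ c (0, 1)) := by
    apply hsup 0 1 (0,1) (hvmem _ (by norm_num)) (by norm_num)
    apply hW4 <;> norm_num [lf_apply, ιR]
  have hodd3 : Odd (dotZ c (-1, -1)) := by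
    apply hsup (-1) 0 (-1,-1) (hvmem _ (by norm_num)) (by norm_num)
    apply hW4 <;> norm_num [lf_apply, ιR]
  have d1 : dotZ c (1, 0) = c.1 := by simp [dotZ]
  have d2 : dotZ c (0, 1) = c.2 := by simp [dotZ]
  have d3 : dotZ c (-1, -1) = -c.1 - c.2 := by simp [dotZ]; ring
  rw [d1] at hodd1
  rw [d2] at hodd2
  rw [d3] at hodd3
  obtain ⟨k1, hk1⟩ := hodd1
  obtain ⟨k2, hk2⟩ := hodd2
  obtain ⟨k3, hk3⟩ := hodd3
  omega

/-! ### Invariance along `MutEquiv` and the theorem -/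

lemma Hinv_iff_of_mutEquiv {P Q : FanoPolygon} (h : MutEquiv P Q) :
    Hinv P ↔ Hinv Q := by
  induction h with
  | rel A B hr =>
    rcases hr with hmut | hgl
    · obtain ⟨w, v, hEN, hvp, hwv, G, hMD, hQ⟩ := hmut
      have S : MutScen A B w v G := ⟨hEN, hvp, hwv, hMD, hQ⟩
      constructor
      · rintro ⟨c, hc⟩
        exact ⟨c, S.transfer_fwd hc⟩
      · rintro ⟨c, hc⟩
        exact ⟨c, S.transfer_bwd hc⟩
    · obtain ⟨f, hf⟩ := hgl
      constructor
      · exact gl_transfer f hf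
      · apply gl_transfer f.symm
        rw [hf, Finset.image_image]
        have : (⇑f.symm ∘ ⇑f) = id := by
          funext z
          simp
        rw [this, Finset.image_id]
  | refl A => exact Iff.rfl
  | symm _ _ _ ih => exact ih.symm
  | trans _ _ _ _ _ ih1 ih2 => exact ih1.trans ih2


end Inv

end FanoPaper


open FanoPaper in
/-- The polygons of `𝔽₁` and `ℙ¹ × ℙ¹` are not mutation-equivalent. -/
theorem F1_not_mutEquiv_P1xP1 (P Q : FanoPolygon)
    (hP : P.verts = ({(1,0),(0,1),(-1,-1),(0,-1)} : Finset NZ))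
    (hQ : Q.verts = ({(1,0),(0,1),(-1,0),(0,-1)} : Finset NZ)) :
    ¬ MutEquiv P Q := by
  intro h
  exact FanoPaper.Inv.not_Hinv_F1 P hP
    ((FanoPaper.Inv.Hinv_iff_of_mutEquiv h).2 (FanoPaper.Inv.Hinv_square Q hQ))
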